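/- arXiv:2402.01966 — 7 statements merged into one kernel-verified Lean document; each statement's English description precedes it below -/
import Mathlib

section
/- Let φ be a real number with 0 < |φ| < 1 and let (ε_t)_{t∈ℤ} be a sequence of real numbers such that ∑_{t∈ℤ} r^{|t|} |ε_t| < ∞ for every r ∈ (0,1). Then a sequence (x_t)_{t∈ℤ} of real numbers satisfies x_t = φ x_{t-1} + ε_t for all t ∈ ℤ if and only if there exists v ∈ ℝ such that x_t = φ^t v + ∑_{k=0}^∞ φ^k ε_{t-k} for all t ∈ ℤ. -/
open Filter Topology

/-- A two-sided real sequence is subexponential. -/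
def Subexp (y : ℤ → ℝ) : Prop :=
  ∀ r ∈ Set.Ioo (0 : ℝ) 1, Summable fun t : ℤ => r ^ t.natAbs * |y t|

lemma summable_aux (φ : ℝ) (hφ0 : 0 < |φ|) (hφ1 : |φ| < 1)
    (ε : ℤ → ℝ) (hε : Subexp ε) (t : ℤ) :
    Summable fun k : ℕ => φ ^ k * ε (t - k) := by
  have h := hε |φ| ⟨hφ0, hφ1⟩
  have hinj : Function.Injective (fun k : ℕ => t - (k : ℤ)) := by
    intro a b hab; simpa using hab
  have h2 : Summable fun k : ℕ => |φ| ^ (t - (k : ℤ)).natAbs * |ε (t - k)| :=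
    h.comp_injective hinj
  have h3 := h2.mul_left ((|φ| ^ t.natAbs)⁻¹)
  apply Summable.of_norm_bounded h3
  intro k
  rw [norm_mul, Real.norm_eq_abs, Real.norm_eq_abs, abs_pow]
  have key : |φ| ^ (k + t.natAbs) ≤ |φ| ^ (t - (k : ℤ)).natAbs := by
    apply pow_le_pow_of_le_one (abs_nonneg _) hφ1.le
    omega
  rw [pow_add] at key
  have hpos : (0 : ℝ) < |φ| ^ t.natAbs := by positivity
  calc |φ| ^ k * |ε (t - k)|
      = (|φ| ^ t.natAbs)⁻¹ * ((|φ| ^ k * |φ| ^ t.natAbs) * |ε (t - k)|) := by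
        field_simp
    _ ≤ (|φ| ^ t.natAbs)⁻¹ * (|φ| ^ (t - (k : ℤ)).natAbs * |ε (t - k)|) := by
        gcongr

lemma S_shift (φ : ℝ) (hφ0 : 0 < |φ|) (hφ1 : |φ| < 1)
    (ε : ℤ → ℝ) (hε : Subexp ε) (t : ℤ) :
    (∑' k : ℕ, φ ^ k * ε (t - k)) = ε t + φ * ∑' k : ℕ, φ ^ k * ε (t - 1 - k) := by
  rw [Summable.tsum_eq_zero_add (summable_aux φ hφ0 hφ1 ε hε t)]
  simp only [pow_zero, one_mul, Nat.cast_zero, sub_zero]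
  congr 1
  rw [← tsum_mul_left]
  congr 1; funext k
  have harg : t - ((k : ℤ) + 1) = t - 1 - k := by ring
  push_cast
  rw [harg, pow_succ]
  ring

theorem stmt_0 (φ : ℝ) (hφ0 : 0 < |φ|) (hφ1 : |φ| < 1)
    (ε : ℤ → ℝ) (hε : Subexp ε) (x : ℤ → ℝ) :
    (∀ t : ℤ, x t = φ * x (t - 1) + ε t) ↔
      ∃ v : ℝ, ∀ t : ℤ, x t = φ ^ t * v + ∑' k : ℕ, φ ^ k * ε (t - k) := by
  have hφne : φ ≠ 0 := abs_pos.mp hφ0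
  set S : ℤ → ℝ := fun t => ∑' k : ℕ, φ ^ k * ε (t - k) with hS
  have hshift : ∀ t : ℤ, S t = ε t + φ * S (t - 1) := fun t =>
    S_shift φ hφ0 hφ1 ε hε t
  constructor
  · intro hx
    refine ⟨x 0 - S 0, ?_⟩
    set y : ℤ → ℝ := fun t => x t - S t with hy
    have hrec : ∀ t : ℤ, y t = φ * y (t - 1) := by
      intro t
      simp only [hy]
      rw [hx t, hshift t]
      ring
    have hpow : ∀ t : ℤ, y t = φ ^ t * y 0 := by
      intro t
      induction t using Int.induction_on with
      | zero => simp
      | succ n ih =>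
        have := hrec (n + 1)
        simp only [add_sub_cancel_right] at this
        rw [this, ih, zpow_add₀ hφne, zpow_one]
        ring
      | pred n ih =>
        have := hrec (-n)
        have h2 : y (-(n : ℤ) - 1) = φ⁻¹ * y (-n) := by
          field_simp [this]
          rw [this]; ring
        rw [h2, ih]
        rw [show (-(n : ℤ) - 1) = (-n) + (-1) by ring, zpow_add₀ hφne, zpow_neg_one]
        ring
    intro t
    have := hpow t
    simp only [hy] at this
    show x t = φ ^ t * (x 0 - S 0) + S t
    linarith [this]
  · rintro ⟨v, hv⟩ t
    have h1 : x t = φ ^ t * v + S t := hv t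
    have h2 : x (t - 1) = φ ^ (t - 1) * v + S (t - 1) := hv (t - 1)
    have hp : φ ^ t = φ * φ ^ (t - 1) := by
      rw [zpow_sub_one₀ hφne]; field_simp
    rw [h1, h2, hshift t, hp]
    ring
end

section
/- Let φ be a real number with 0 < |φ| < 1 and let (ε_t)_{t∈ℤ} be a subexponential sequence of real numbers. If (x_t)_{t∈ℤ} satisfies x_t = φ x_{t-1} + ε_t for all t ∈ ℤ, then the limit lim_{n→∞} φ^n x_{-n} exists, and x_t = φ^t (lim_{n→∞} φ^n x_{-n}) + ∑_{k=0}^∞ φ^k ε_{t-k} for each t ∈ ℤ. -/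
open Filter Topology

theorem stmt_1 (φ : ℝ) (hφ0 : 0 < |φ|) (hφ1 : |φ| < 1)
    (ε : ℤ → ℝ) (hε : Subexp ε) (x : ℤ → ℝ)
    (hx : ∀ t : ℤ, x t = φ * x (t - 1) + ε t) :
    ∃ L : ℝ, Tendsto (fun n : ℕ => φ ^ n * x (-(n : ℤ))) atTop (𝓝 L) ∧
      ∀ t : ℤ, x t = φ ^ t * L + ∑' k : ℕ, φ ^ k * ε (t - k) := by
  have hφ : φ ≠ 0 := abs_pos.mp hφ0
  -- summability
  have hsum : ∀ t : ℤ, Summable fun k : ℕ => φ ^ k * ε (t - k) := by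
    intro t
    have h1 : Summable fun s : ℤ => |φ| ^ s.natAbs * |ε s| := hε |φ| ⟨hφ0, hφ1⟩
    have h2 : Summable fun k : ℕ => |φ| ^ (t - (k : ℤ)).natAbs * |ε (t - k)| :=
      h1.comp_injective (fun a b hab => by omega)
    have h3 := h2.mul_left ((|φ| ^ t.natAbs)⁻¹)
    apply Summable.of_abs
    apply Summable.of_nonneg_of_le (fun k => abs_nonneg _) (fun k => ?_) h3
    have key : |φ| ^ k * |φ| ^ t.natAbs ≤ |φ| ^ (t - (k : ℤ)).natAbs := by
      rw [← pow_add]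
      exact pow_le_pow_of_le_one (abs_nonneg _) hφ1.le (by omega)
    have hpos : (0 : ℝ) < |φ| ^ t.natAbs := pow_pos hφ0 _
    have hk : |φ| ^ k ≤ (|φ| ^ t.natAbs)⁻¹ * |φ| ^ (t - (k : ℤ)).natAbs := by
      rw [le_inv_mul_iff₀ hpos]
      linarith [key]
    calc |φ ^ k * ε (t - k)| = |φ| ^ k * |ε (t - k)| := by
          rw [abs_mul, abs_pow]
      _ ≤ ((|φ| ^ t.natAbs)⁻¹ * |φ| ^ (t - (k : ℤ)).natAbs) * |ε (t - k)| :=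
          mul_le_mul_of_nonneg_right hk (abs_nonneg _)
      _ = (|φ| ^ t.natAbs)⁻¹ * (|φ| ^ (t - (k : ℤ)).natAbs * |ε (t - k)|) := by ring
  set S : ℤ → ℝ := fun t => ∑' k : ℕ, φ ^ k * ε (t - k) with hSdef
  -- recurrence for S
  have hS : ∀ t : ℤ, S t = ε t + φ * S (t - 1) := by
    intro t
    have h0 := Summable.tsum_eq_zero_add (hsum t)
    rw [hSdef]
    simp only []
    rw [h0]
    congr 1
    · simp
    · rw [← tsum_mul_left]
      apply tsum_congr
      intro k
      have : t - ((k : ℤ) + 1) = t - 1 - k := by ring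
      push_cast
      rw [this]
      ring
  -- y t = x t - S t satisfies y t = φ^t * y 0
  have key : ∀ t : ℤ, x t - S t = φ ^ t * (x 0 - S 0) := by
    intro t
    induction t using Int.induction_on with
    | zero => simp
    | succ n ih =>
      have h1 := hx ((n : ℤ) + 1)
      have h2 := hS ((n : ℤ) + 1)
      have h3 : ((n : ℤ) + 1) - 1 = n := by ring
      rw [h3] at h1 h2
      rw [zpow_add_one₀ hφ]
      have : x ((n : ℤ) + 1) - S ((n : ℤ) + 1) = φ * (x n - S n) := by
        rw [h1, h2]; ring
      rw [this, ih]; ring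
    | pred n ih =>
      have h1 := hx (-(n : ℤ))
      have h2 := hS (-(n : ℤ))
      have h3 : -(n : ℤ) - 1 = -n - 1 := rfl
      have hstep : x (-(n : ℤ)) - S (-(n : ℤ)) = φ * (x (-(n : ℤ) - 1) - S (-(n : ℤ) - 1)) := by
        rw [h1, h2]; ring
      rw [ih] at hstep
      have : x (-(n : ℤ) - 1) - S (-(n : ℤ) - 1) = φ ^ (-(n : ℤ)) * (x 0 - S 0) / φ := by
        field_simp at hstep ⊢
        linarith [hstep]
      rw [this, zpow_sub_one₀ hφ]
      ring
  refine ⟨x 0 - S 0, ?_, ?_⟩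
  · -- φ^n x(-n) = x 0 - partial sums
    have heq : ∀ n : ℕ, φ ^ n * x (-(n : ℤ)) =
        x 0 - ∑ k ∈ Finset.range n, φ ^ k * ε (0 - (k : ℤ)) := by
      intro n
      induction n with
      | zero => simp
      | succ n ih =>
        have h1 := hx (-(n : ℤ))
        have h2 : (-(((n : ℕ) + 1 : ℕ) : ℤ)) = -(n : ℤ) - 1 := by push_cast; ring
        rw [Finset.sum_range_succ, h2]
        have : φ ^ (n + 1) * x (-(n : ℤ) - 1) = φ ^ n * (φ * x (-(n : ℤ) - 1)) := by ring
        rw [this]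
        have h4 : φ * x (-(n : ℤ) - 1) = x (-(n : ℤ)) - ε (-(n : ℤ)) := by
          rw [h1]; ring
        rw [h4]
        have h5 : (0 : ℤ) - (n : ℤ) = -(n : ℤ) := by ring
        rw [h5]
        rw [mul_sub, ih]
        ring
    have htend : Tendsto (fun n : ℕ => ∑ k ∈ Finset.range n, φ ^ k * ε (0 - (k : ℤ)))
        atTop (𝓝 (S 0)) := (hsum 0).hasSum.tendsto_sum_nat
    have := (tendsto_const_nhds (x := x 0) (f := atTop)).sub htend
    simpa only [← heq] using this
  · intro t
    have := key t
    linarith [key t]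
end

section
/- Let φ be a real number with |φ| > 1 and let (ε_t)_{t∈ℤ} be a subexponential sequence of real numbers. Then a sequence (x_t)_{t∈ℤ} satisfies x_t = φ x_{t-1} + ε_t for all t ∈ ℤ if and only if there exists v ∈ ℝ such that x_t = φ^t v − ∑_{k=1}^∞ φ^{-k} ε_{t+k} for all t ∈ ℤ. Moreover such v is unique and equals lim_{n→∞} φ^{-n} x_n. -/
open Filter Topology

set_option maxHeartbeats 1000000

noncomputable def auxT (φ : ℝ) (ε : ℤ → ℝ) (t : ℤ) : ℝ :=
  ∑' k : ℕ, φ ^ (-(k : ℤ) - 1) * ε (t + k + 1)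

section Aux

variable {φ : ℝ} {ε : ℤ → ℝ}

lemma abs_zpow' (a : ℝ) (n : ℤ) : |a ^ n| = |a| ^ n :=
  map_zpow₀ (absHom : ℝ →*₀ ℝ) a n

lemma aux_abs_zpow (hφ : 1 < |φ|) (k : ℕ) :
    |φ ^ (-(k : ℤ) - 1)| = (|φ|⁻¹) ^ (k + 1) := by
  rw [abs_zpow', show -(k : ℤ) - 1 = -((k : ℤ) + 1) by ring, zpow_neg, inv_pow]
  norm_cast

lemma aux_summable (hφ : 1 < |φ|) (hε : Subexp ε) (t : ℤ) :
    Summable fun k : ℕ => φ ^ (-(k : ℤ) - 1) * ε (t + k + 1) := by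
  set r : ℝ := |φ|⁻¹ with hrdef
  have hr0 : 0 < r := inv_pos.mpr (lt_trans one_pos hφ)
  have hr1 : r < 1 := by
    rw [hrdef, inv_lt_one_iff₀]; right; exact hφ
  have hg : Summable fun m : ℤ => r ^ m.natAbs * |ε m| := hε r ⟨hr0, hr1⟩
  have hinj : Function.Injective (fun k : ℕ => t + k + 1) := by
    intro a b h; simp only at h; omega
  have h1 : Summable (fun k : ℕ => r ^ (t + k + 1).natAbs * |ε (t + k + 1)|) :=
    hg.comp_injective hinj
  apply Summable.of_abs
  apply Summable.of_nonneg_of_le (fun k => abs_nonneg _) (fun k => ?_)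
    (h1.mul_left ((r ^ t.natAbs)⁻¹))
  rw [abs_mul, aux_abs_zpow hφ, ← hrdef, ← mul_assoc]
  apply mul_le_mul_of_nonneg_right _ (abs_nonneg _)
  rw [le_inv_mul_iff₀ (pow_pos hr0 _), ← pow_add]
  apply pow_le_pow_of_le_one hr0.le hr1.le
  omega

lemma aux_shift (hφ : 1 < |φ|) (hε : Subexp ε) (t : ℤ) :
    auxT φ ε (t - 1) = φ⁻¹ * (ε t + auxT φ ε t) := by
  have hφ0 : φ ≠ 0 := by intro h; rw [h] at hφ; simp at hφ; linarith
  have h0 : auxT φ ε (t - 1) = ∑' k : ℕ, φ ^ (-(k : ℤ) - 1) * ε (t + k) := by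
    unfold auxT
    apply tsum_congr; intro k; congr 1; ring
  have hsum : Summable fun k : ℕ => φ ^ (-(k : ℤ) - 1) * ε (t + k) := by
    have := aux_summable hφ hε (t - 1)
    apply this.congr; intro k; congr 1; ring
  rw [h0, Summable.tsum_eq_zero_add hsum]
  have h1 : (∑' k : ℕ, φ ^ (-((k : ℕ) + 1 : ℕ) - 1 : ℤ) * ε (t + ((k : ℕ) + 1 : ℕ))) =
      ∑' k : ℕ, φ⁻¹ * (φ ^ (-(k : ℤ) - 1) * ε (t + k + 1)) := by
    apply tsum_congr; intro k
    rw [show (-((k : ℕ) + 1 : ℕ) - 1 : ℤ) = (-1) + (-(k : ℤ) - 1) by push_cast; ring,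
      zpow_add₀ hφ0, zpow_neg_one, mul_assoc]
    congr 2
    push_cast; ring
  rw [h1, tsum_mul_left]
  simp only [auxT, Nat.cast_zero, neg_zero, zero_sub, zpow_neg_one, add_zero]
  ring

lemma aux_tendsto (hφ : 1 < |φ|) (hε : Subexp ε) :
    Tendsto (fun n : ℕ => φ ^ (-(n : ℤ)) * auxT φ ε n) atTop (𝓝 0) := by
  set r : ℝ := |φ|⁻¹ with hrdef
  have hφ1 : (0:ℝ) < |φ| := lt_trans one_pos hφ
  have hr0 : 0 < r := inv_pos.mpr hφ1
  have hr1 : r < 1 := by rw [hrdef, inv_lt_one_iff₀]; right; exact hφ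
  have hg : Summable fun m : ℤ => r ^ m.natAbs * |ε m| := hε r ⟨hr0, hr1⟩
  set G : ℕ → ℝ := fun m => r ^ m * |ε m| with hGdef
  have hbound : ∀ n : ℕ, |φ ^ (-(n : ℤ)) * auxT φ ε n| ≤ ∑' k : ℕ, G (k + (n + 1)) := by
    intro n
    have hterm : ∀ k : ℕ,
        |φ ^ (-(n : ℤ)) * (φ ^ (-(k : ℤ) - 1) * ε ((n : ℤ) + k + 1))| = G (k + (n + 1)) := by
      intro k
      have harg : (n : ℤ) + k + 1 = ((k + (n + 1) : ℕ) : ℤ) := by push_cast; ring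
      rw [abs_mul, abs_mul, aux_abs_zpow hφ, abs_zpow', zpow_neg, zpow_natCast, ← inv_pow,
        ← hrdef, harg, ← mul_assoc, ← pow_add]
      simp only [hGdef]
      rw [show n + (k + 1) = k + (n + 1) by omega]
    have hsumabs : Summable fun k : ℕ =>
        |φ ^ (-(n : ℤ)) * (φ ^ (-(k : ℤ) - 1) * ε ((n : ℤ) + k + 1))| :=
      ((aux_summable hφ hε (n : ℤ)).mul_left _).abs
    have heq : φ ^ (-(n : ℤ)) * auxT φ ε n =
        ∑' k : ℕ, φ ^ (-(n : ℤ)) * (φ ^ (-(k : ℤ) - 1) * ε ((n : ℤ) + k + 1)) := by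
      rw [tsum_mul_left]; rfl
    have h2 : ‖∑' k : ℕ, φ ^ (-(n : ℤ)) * (φ ^ (-(k : ℤ) - 1) * ε ((n : ℤ) + k + 1))‖ ≤
        ∑' k : ℕ, ‖φ ^ (-(n : ℤ)) * (φ ^ (-(k : ℤ) - 1) * ε ((n : ℤ) + k + 1))‖ :=
      norm_tsum_le_tsum_norm (by simpa only [Real.norm_eq_abs] using hsumabs)
    simp only [Real.norm_eq_abs] at h2
    calc |φ ^ (-(n : ℤ)) * auxT φ ε n|
        ≤ ∑' k : ℕ, |φ ^ (-(n : ℤ)) * (φ ^ (-(k : ℤ) - 1) * ε ((n : ℤ) + k + 1))| := by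
          rw [heq]; exact h2
      _ = ∑' k : ℕ, G (k + (n + 1)) := tsum_congr hterm
  have htail : Tendsto (fun n : ℕ => ∑' k : ℕ, G (k + (n + 1))) atTop (𝓝 0) :=
    (tendsto_sum_nat_add G).comp (tendsto_add_atTop_nat 1)
  have habs : Tendsto (fun n : ℕ => |φ ^ (-(n : ℤ)) * auxT φ ε n|) atTop (𝓝 0) :=
    squeeze_zero (fun n => abs_nonneg _) hbound htail
  exact (tendsto_zero_iff_abs_tendsto_zero _).mpr habs

end Aux

theorem stmt_3 (φ : ℝ) (hφ : 1 < |φ|)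
    (ε : ℤ → ℝ) (hε : Subexp ε) (x : ℤ → ℝ) :
    ((∀ t : ℤ, x t = φ * x (t - 1) + ε t) ↔
      ∃ v : ℝ, ∀ t : ℤ, x t = φ ^ t * v - ∑' k : ℕ, φ ^ (-(k : ℤ) - 1) * ε (t + k + 1)) ∧
    ((∀ t : ℤ, x t = φ * x (t - 1) + ε t) →
      ∃! v : ℝ, (∀ t : ℤ, x t = φ ^ t * v - ∑' k : ℕ, φ ^ (-(k : ℤ) - 1) * ε (t + k + 1)) ∧
        Tendsto (fun n : ℕ => φ ^ (-(n : ℤ)) * x n) atTop (𝓝 v)) := by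
  have hφ0 : φ ≠ 0 := by intro h; rw [h] at hφ; simp at hφ; linarith
  have hfwd : (∀ t : ℤ, x t = φ * x (t - 1) + ε t) →
      ∀ t : ℤ, x t = φ ^ t * (x 0 + auxT φ ε 0) - auxT φ ε t := by
    intro hrec
    have hw : ∀ t : ℤ, x t + auxT φ ε t = φ * (x (t - 1) + auxT φ ε (t - 1)) := by
      intro t
      rw [hrec t, aux_shift hφ hε t]
      field_simp
      ring
    have key : ∀ t : ℤ, x t + auxT φ ε t = φ ^ t * (x 0 + auxT φ ε 0) := by
      intro t
      induction t using Int.induction_on with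
      | zero => simp
      | succ n ih =>
        have h := hw ((n : ℤ) + 1)
        rw [show (n : ℤ) + 1 - 1 = (n : ℤ) by ring] at h
        rw [h, ih, ← mul_assoc, ← zpow_one_add₀ hφ0]
        congr 2
        ring
      | pred n ih =>
        have h := hw (-(n : ℤ))
        rw [ih, show -(n : ℤ) - 1 = -(n : ℤ) - 1 by rfl] at h
        have h2 := congrArg (fun z => φ⁻¹ * z) h
        rw [← mul_assoc, ← mul_assoc, inv_mul_cancel₀ hφ0, one_mul] at h2
        rw [← h2, mul_assoc]
        nth_rewrite 1 [show φ⁻¹ = φ ^ (-1 : ℤ) by rw [zpow_neg_one]]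
        rw [← mul_assoc, ← zpow_add₀ hφ0]
        congr 2
        ring
    intro t
    have := key t
    linarith
  have hbwd : ∀ v : ℝ, (∀ t : ℤ, x t = φ ^ t * v - auxT φ ε t) →
      ∀ t : ℤ, x t = φ * x (t - 1) + ε t := by
    intro v hv t
    rw [hv t, hv (t - 1), aux_shift hφ hε t]
    have hz : φ ^ t = φ * φ ^ (t - 1) := by
      rw [← zpow_one_add₀ hφ0]; congr 1; ring
    rw [hz]
    field_simp
    ring
  have huniq : ∀ v : ℝ, (∀ t : ℤ, x t = φ ^ t * v - auxT φ ε t) → v = x 0 + auxT φ ε 0 := by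
    intro v hv
    have := hv 0
    simp only [zpow_zero, one_mul] at this
    linarith
  constructor
  · constructor
    · intro hrec
      exact ⟨x 0 + auxT φ ε 0, hfwd hrec⟩
    · rintro ⟨v, hv⟩
      exact hbwd v hv
  · intro hrec
    refine ⟨x 0 + auxT φ ε 0, ⟨hfwd hrec, ?_⟩, ?_⟩
    · have hx : ∀ n : ℕ, φ ^ (-(n : ℤ)) * x n =
          (x 0 + auxT φ ε 0) - φ ^ (-(n : ℤ)) * auxT φ ε n := by
        intro n
        rw [hfwd hrec (n : ℤ)]
        rw [mul_sub, ← mul_assoc, ← zpow_add₀ hφ0]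
        simp
      simp only [hx]
      have := (tendsto_const_nhds (x := x 0 + auxT φ ε 0) (f := atTop (α := ℕ))).sub
        (aux_tendsto hφ hε)
      simpa using this
    · rintro v ⟨hv, -⟩
      exact huniq v hv
end

section
/- Let φ be a real number with |φ| > 1 and let (ε_t)_{t∈ℤ} be a subexponential sequence of real numbers. If (x_t)_{t∈ℤ} satisfies x_t = φ x_{t-1} + ε_t for all t ∈ ℤ and (x_t) is subexponential, then x_t = −∑_{k=1}^∞ φ^{-k} ε_{t+k} for all t ∈ ℤ; in particular there is exactly one subexponential solution. -/
open Filter Topology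

namespace Stmt4Aux

lemma abs_zpow_neg (φ : ℝ) (k : ℕ) : |φ ^ (-(k : ℤ) - 1)| = |φ|⁻¹ ^ (k + 1) := by
  rw [show (-(k : ℤ) - 1) = -((k + 1 : ℕ) : ℤ) by push_cast; ring, zpow_neg, zpow_natCast,
    abs_inv, abs_pow, inv_pow]

lemma subexp_bound {y : ℤ → ℝ} (hy : Subexp y) {ρ : ℝ} (hρ : ρ ∈ Set.Ioo (0:ℝ) 1) (s : ℤ) :
    |y s| ≤ (∑' u : ℤ, ρ ^ u.natAbs * |y u|) * ρ⁻¹ ^ s.natAbs := by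
  have h1 : ρ ^ s.natAbs * |y s| ≤ ∑' u : ℤ, ρ ^ u.natAbs * |y u| :=
    Summable.le_tsum (hy ρ hρ) s fun _ _ => mul_nonneg (pow_nonneg hρ.1.le _) (abs_nonneg _)
  have hρ0 : (0:ℝ) < ρ ^ s.natAbs := pow_pos hρ.1 _
  rw [inv_pow, ← div_eq_mul_inv, le_div_iff₀ hρ0]
  linarith [h1]

/-- the key geometric bound on the terms of the series -/
lemma term_bound {φ : ℝ} (hφ : 1 < |φ|) {ε : ℤ → ℝ} (hε : Subexp ε) {ρ : ℝ}
    (hρ : ρ ∈ Set.Ioo (0:ℝ) 1) (hρφ : |φ|⁻¹ < ρ) (t : ℤ) (k : ℕ) :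
    |φ ^ (-(k : ℤ) - 1) * ε (t + k + 1)| ≤
      ((∑' u : ℤ, ρ ^ u.natAbs * |ε u|) * ρ⁻¹ ^ t.natAbs) * ((ρ * |φ|)⁻¹) ^ (k + 1) := by
  have hφ0 : (0:ℝ) < |φ| := lt_trans one_pos hφ
  have hT : 0 ≤ ∑' u : ℤ, ρ ^ u.natAbs * |ε u| :=
    tsum_nonneg fun u => mul_nonneg (pow_nonneg hρ.1.le _) (abs_nonneg _)
  have hρinv : 1 ≤ ρ⁻¹ := one_le_inv_iff₀.mpr ⟨hρ.1, le_of_lt hρ.2⟩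
  have hna : (t + k + 1).natAbs ≤ t.natAbs + (k + 1) := by
    have := Int.natAbs_add_le (t) ((k : ℤ) + 1)
    have h2 : ((k : ℤ) + 1).natAbs = k + 1 := by omega
    omega
  calc |φ ^ (-(k : ℤ) - 1) * ε (t + k + 1)|
      = |φ|⁻¹ ^ (k + 1) * |ε (t + k + 1)| := by rw [abs_mul, abs_zpow_neg]
    _ ≤ |φ|⁻¹ ^ (k + 1) * ((∑' u : ℤ, ρ ^ u.natAbs * |ε u|) * ρ⁻¹ ^ (t + k + 1).natAbs) := by
        apply mul_le_mul_of_nonneg_left (subexp_bound hε hρ _) (by positivity)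
    _ ≤ |φ|⁻¹ ^ (k + 1) * ((∑' u : ℤ, ρ ^ u.natAbs * |ε u|) * ρ⁻¹ ^ (t.natAbs + (k + 1))) := by
        apply mul_le_mul_of_nonneg_left (mul_le_mul_of_nonneg_left _ hT) (by positivity)
        exact pow_le_pow_right₀ hρinv hna
    _ = ((∑' u : ℤ, ρ ^ u.natAbs * |ε u|) * ρ⁻¹ ^ t.natAbs) * ((ρ * |φ|)⁻¹) ^ (k + 1) := by
        rw [mul_inv, mul_pow, pow_add]
        ring

lemma summable_series {φ : ℝ} (hφ : 1 < |φ|) {ε : ℤ → ℝ} (hε : Subexp ε) (t : ℤ) :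
    Summable fun k : ℕ => |φ ^ (-(k : ℤ) - 1) * ε (t + k + 1)| := by
  have hφ0 : (0:ℝ) < |φ| := lt_trans one_pos hφ
  set ρ : ℝ := (1 + |φ|⁻¹) / 2 with hρdef
  have hφinv : |φ|⁻¹ < 1 := inv_lt_one_of_one_lt₀ hφ
  have hφinv0 : 0 < |φ|⁻¹ := by positivity
  have hρ : ρ ∈ Set.Ioo (0:ℝ) 1 := ⟨by positivity, by rw [hρdef]; linarith⟩
  have hρφ : |φ|⁻¹ < ρ := by rw [hρdef]; linarith
  have hc1 : (ρ * |φ|)⁻¹ < 1 := by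
    rw [inv_lt_one_iff₀]
    right
    calc 1 = |φ|⁻¹ * |φ| := by field_simp
      _ < ρ * |φ| := by apply mul_lt_mul_of_pos_right hρφ hφ0
  have hc0 : 0 < (ρ * |φ|)⁻¹ := by positivity
  apply Summable.of_nonneg_of_le (fun k => abs_nonneg _) (term_bound hφ hε hρ hρφ t)
  have : Summable fun k : ℕ => ((ρ * |φ|)⁻¹) ^ (k + 1) := by
    simpa [pow_succ] using (summable_geometric_of_lt_one hc0.le hc1).mul_right ((ρ * |φ|)⁻¹)
  exact this.mul_left _

end Stmt4Aux

open Stmt4Aux in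
set_option maxHeartbeats 2000000 in
theorem stmt_4 (φ : ℝ) (hφ : 1 < |φ|)
    (ε : ℤ → ℝ) (hε : Subexp ε) :
    (∀ x : ℤ → ℝ, (∀ t : ℤ, x t = φ * x (t - 1) + ε t) → Subexp x →
      ∀ t : ℤ, x t = -∑' k : ℕ, φ ^ (-(k : ℤ) - 1) * ε (t + k + 1)) ∧
    ∃! x : ℤ → ℝ, (∀ t : ℤ, x t = φ * x (t - 1) + ε t) ∧ Subexp x := by
  have hφ0 : φ ≠ 0 := by intro h; rw [h] at hφ; simp at hφ; linarith
  have habs0 : (0:ℝ) < |φ| := lt_trans one_pos hφ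
  -- Part 1
  have H : ∀ x : ℤ → ℝ, (∀ t : ℤ, x t = φ * x (t - 1) + ε t) → Subexp x →
      ∀ t : ℤ, x t = -∑' k : ℕ, φ ^ (-(k : ℤ) - 1) * ε (t + k + 1) := by
    intro x hrec hx t
    have key : ∀ n : ℕ, x t = φ ^ (-(n : ℤ)) * x (t + n)
        - ∑ k ∈ Finset.range n, φ ^ (-(k : ℤ) - 1) * ε (t + k + 1) := by
      intro n
      induction n with
      | zero => simp
      | succ n ih =>
        have h1 := hrec (t + n + 1)
        have h2 : (t + (n : ℤ) + 1) - 1 = t + n := by ring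
        rw [h2] at h1
        rw [Finset.sum_range_succ]
        have h3 : φ ^ (-((n : ℤ) + 1)) * x (t + ((n : ℕ) + 1 : ℕ))
            = φ ^ (-(n : ℤ)) * x (t + n) + φ ^ (-(n : ℤ) - 1) * ε (t + n + 1) := by
          have harg : (t + ((n : ℕ) + 1 : ℕ) : ℤ) = t + (n : ℤ) + 1 := by push_cast; ring
          rw [harg, h1]
          have e1 : φ ^ (-(n:ℤ)) = φ ^ (-(n:ℤ) - 1) * φ := by
            rw [← zpow_add_one₀ hφ0]; ring_nf
          have e2 : φ ^ (-((n:ℤ) + 1)) = φ ^ (-(n:ℤ) - 1) := by ring_nf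
          rw [e1, e2]; ring
        push_cast at h3 ⊢
        rw [h3, ih]; ring
    -- the limit of φ^{-n} x (t+n)
    set ρ : ℝ := (1 + |φ|⁻¹) / 2 with hρdef
    have hφinv : |φ|⁻¹ < 1 := inv_lt_one_of_one_lt₀ hφ
    have hφinv0 : 0 < |φ|⁻¹ := by positivity
    have hρ : ρ ∈ Set.Ioo (0:ℝ) 1 := ⟨by positivity, by rw [hρdef]; linarith⟩
    have hρφ : |φ|⁻¹ < ρ := by rw [hρdef]; linarith
    have hc1 : (ρ * |φ|)⁻¹ < 1 := by
      rw [inv_lt_one_iff₀]; right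
      calc 1 = |φ|⁻¹ * |φ| := by field_simp
        _ < ρ * |φ| := by apply mul_lt_mul_of_pos_right hρφ habs0
    have hc0 : 0 < (ρ * |φ|)⁻¹ := by positivity
    have hρinv : 1 ≤ ρ⁻¹ := one_le_inv_iff₀.mpr ⟨hρ.1, le_of_lt hρ.2⟩
    set T : ℝ := ∑' u : ℤ, ρ ^ u.natAbs * |x u| with hT
    have hT0 : 0 ≤ T := tsum_nonneg fun u => mul_nonneg (pow_nonneg hρ.1.le _) (abs_nonneg _)
    have hbound : ∀ n : ℕ, ‖φ ^ (-(n : ℤ)) * x (t + n)‖ ≤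
        (T * ρ⁻¹ ^ t.natAbs) * ((ρ * |φ|)⁻¹) ^ n := by
      intro n
      have hna : (t + n).natAbs ≤ t.natAbs + n := by
        have := Int.natAbs_add_le t (n : ℤ)
        omega
      have e1 : ‖φ ^ (-(n : ℤ)) * x (t + n)‖ = |φ|⁻¹ ^ n * |x (t + n)| := by
        rw [Real.norm_eq_abs, abs_mul, zpow_neg, zpow_natCast, abs_inv, abs_pow, inv_pow]
      rw [e1]
      calc |φ|⁻¹ ^ n * |x (t + n)|
          ≤ |φ|⁻¹ ^ n * (T * ρ⁻¹ ^ (t + n).natAbs) := by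
            apply mul_le_mul_of_nonneg_left (subexp_bound hx hρ _) (by positivity)
        _ ≤ |φ|⁻¹ ^ n * (T * ρ⁻¹ ^ (t.natAbs + n)) := by
            apply mul_le_mul_of_nonneg_left (mul_le_mul_of_nonneg_left _ hT0) (by positivity)
            exact pow_le_pow_right₀ hρinv hna
        _ = (T * ρ⁻¹ ^ t.natAbs) * ((ρ * |φ|)⁻¹) ^ n := by
            rw [mul_inv, mul_pow, pow_add]; ring
    have hlim : Tendsto (fun n : ℕ => φ ^ (-(n : ℤ)) * x (t + n)) atTop (𝓝 0) := by
      apply squeeze_zero_norm hbound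
      have := (tendsto_pow_atTop_nhds_zero_of_lt_one hc0.le hc1).const_mul (T * ρ⁻¹ ^ t.natAbs)
      simpa using this
    have hsumabs := summable_series hφ hε t
    have hsum : Summable fun k : ℕ => φ ^ (-(k : ℤ) - 1) * ε (t + k + 1) :=
      summable_abs_iff.mp hsumabs
    have hpart := hsum.hasSum.tendsto_sum_nat
    have hcomb : Tendsto (fun n : ℕ => φ ^ (-(n : ℤ)) * x (t + n)
        - ∑ k ∈ Finset.range n, φ ^ (-(k : ℤ) - 1) * ε (t + k + 1)) atTop
        (𝓝 (0 - ∑' k : ℕ, φ ^ (-(k : ℤ) - 1) * ε (t + k + 1))) := hlim.sub hpart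
    have hconst : Tendsto (fun _ : ℕ => x t) atTop
        (𝓝 (0 - ∑' k : ℕ, φ ^ (-(k : ℤ) - 1) * ε (t + k + 1))) :=
      hcomb.congr fun n => (key n).symm
    have := tendsto_nhds_unique hconst tendsto_const_nhds
    rw [← this, zero_sub]
  refine ⟨H, ?_⟩
  -- Existence
  set x₀ : ℤ → ℝ := fun t => -∑' k : ℕ, φ ^ (-(k : ℤ) - 1) * ε (t + k + 1) with hx₀
  have hrec₀ : ∀ t : ℤ, x₀ t = φ * x₀ (t - 1) + ε t := by
    intro t
    have hsumabs' := summable_series hφ hε (t - 1)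
    have hsum' : Summable fun k : ℕ => φ ^ (-(k : ℤ) - 1) * ε ((t - 1) + k + 1) :=
      summable_abs_iff.mp hsumabs'
    have hg : Summable fun k : ℕ => φ ^ (-(k : ℤ)) * ε (t + k) := by
      have := hsum'.mul_left φ
      apply this.congr
      intro k
      have harg : (t - 1) + (k : ℤ) + 1 = t + k := by ring
      rw [harg]
      rw [show φ * (φ ^ (-(k:ℤ) - 1) * ε (t + k)) = (φ ^ (-(k:ℤ) - 1) * φ) * ε (t + k) by ring,
        ← zpow_add_one₀ hφ0]
      ring_nf
    have e1 : φ * (∑' k : ℕ, φ ^ (-(k : ℤ) - 1) * ε ((t - 1) + k + 1))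
        = ∑' k : ℕ, φ ^ (-(k : ℤ)) * ε (t + k) := by
      rw [← tsum_mul_left]
      apply tsum_congr
      intro k
      have harg : (t - 1) + (k : ℤ) + 1 = t + k := by ring
      rw [harg, show φ * (φ ^ (-(k:ℤ) - 1) * ε (t + k)) = (φ ^ (-(k:ℤ) - 1) * φ) * ε (t + k) by ring,
        ← zpow_add_one₀ hφ0]
      ring_nf
    have e2 : (∑' k : ℕ, φ ^ (-(k : ℤ)) * ε (t + k))
        = ε t + ∑' k : ℕ, φ ^ (-(k : ℤ) - 1) * ε (t + k + 1) := by
      rw [Summable.tsum_eq_zero_add hg]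
      congr 1
      · simp
      · apply tsum_congr
        intro k
        have h1 : (-(((k : ℕ) + 1 : ℕ) : ℤ)) = -(k : ℤ) - 1 := by push_cast; ring
        have h2 : (t + (((k : ℕ) + 1 : ℕ) : ℤ)) = t + k + 1 := by push_cast; ring
        rw [h1, h2]
    simp only [hx₀]
    rw [mul_neg, e1, e2]
    ring
  have hsub₀ : Subexp x₀ := by
    intro r hr
    set ρ : ℝ := (1 + max r |φ|⁻¹) / 2 with hρdef
    have hφinv : |φ|⁻¹ < 1 := inv_lt_one_of_one_lt₀ hφ
    have hφinv0 : 0 < |φ|⁻¹ := by positivity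
    have hmax1 : max r |φ|⁻¹ < 1 := max_lt hr.2 hφinv
    have hmax0 : 0 < max r |φ|⁻¹ := lt_max_of_lt_right hφinv0
    have hρ : ρ ∈ Set.Ioo (0:ℝ) 1 := ⟨by rw [hρdef]; linarith, by rw [hρdef]; linarith⟩
    have hρφ : |φ|⁻¹ < ρ := by
      rw [hρdef]
      have : |φ|⁻¹ ≤ max r |φ|⁻¹ := le_max_right _ _
      linarith
    have hrρ : r < ρ := by
      rw [hρdef]
      have : r ≤ max r |φ|⁻¹ := le_max_left _ _
      linarith
    have hc1 : (ρ * |φ|)⁻¹ < 1 := by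
      rw [inv_lt_one_iff₀]; right
      calc 1 = |φ|⁻¹ * |φ| := by field_simp
        _ < ρ * |φ| := by apply mul_lt_mul_of_pos_right hρφ habs0
    have hc0 : 0 < (ρ * |φ|)⁻¹ := by positivity
    set T : ℝ := ∑' u : ℤ, ρ ^ u.natAbs * |ε u| with hTdef
    have hT0 : 0 ≤ T := tsum_nonneg fun u => mul_nonneg (pow_nonneg hρ.1.le _) (abs_nonneg _)
    set c : ℝ := (ρ * |φ|)⁻¹ with hcdef
    set q : ℝ := r / ρ with hqdef
    have hq0 : 0 ≤ q := div_nonneg hr.1.le hρ.1.le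
    have hq1 : q < 1 := by rw [hqdef, div_lt_one hρ.1]; exact hrρ
    -- bound on each |x₀ t|
    have hxb : ∀ t : ℤ, |x₀ t| ≤ (T * ρ⁻¹ ^ t.natAbs) * (c * (1 - c)⁻¹) := by
      intro t
      have hgeo : Summable fun k : ℕ => ((T * ρ⁻¹ ^ t.natAbs)) * c ^ (k + 1) := by
        have : Summable fun k : ℕ => c ^ (k + 1) := by
          simpa [pow_succ] using (summable_geometric_of_lt_one hc0.le hc1).mul_right c
        exact this.mul_left _
      have h1 : |x₀ t| ≤ ∑' k : ℕ, |φ ^ (-(k : ℤ) - 1) * ε (t + k + 1)| := by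
        rw [hx₀]
        simp only [abs_neg, ← Real.norm_eq_abs]
        exact norm_tsum_le_tsum_norm (by simp only [Real.norm_eq_abs]; exact summable_series hφ hε t)
      have h2 : (∑' k : ℕ, |φ ^ (-(k : ℤ) - 1) * ε (t + k + 1)|)
          ≤ ∑' k : ℕ, ((T * ρ⁻¹ ^ t.natAbs)) * c ^ (k + 1) :=
        Summable.tsum_le_tsum (term_bound hφ hε hρ hρφ t) (summable_series hφ hε t) hgeo
      have h3 : (∑' k : ℕ, ((T * ρ⁻¹ ^ t.natAbs)) * c ^ (k + 1))
          = (T * ρ⁻¹ ^ t.natAbs) * (c * (1 - c)⁻¹) := by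
        rw [tsum_mul_left]
        congr 1
        simp only [pow_succ']
        rw [tsum_mul_left, tsum_geometric_of_lt_one hc0.le hc1]
      linarith [h1, h2, le_of_eq h3]
    -- summability
    have hq : Summable fun t : ℤ => (T * (c * (1 - c)⁻¹)) * q ^ t.natAbs := by
      apply Summable.mul_left
      apply Summable.of_nat_of_neg <;>
        · simpa using summable_geometric_of_lt_one hq0 hq1
    apply Summable.of_nonneg_of_le (fun t => mul_nonneg (pow_nonneg hr.1.le _) (abs_nonneg _)) _ hq
    intro t
    calc r ^ t.natAbs * |x₀ t|
        ≤ r ^ t.natAbs * ((T * ρ⁻¹ ^ t.natAbs) * (c * (1 - c)⁻¹)) := by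
          apply mul_le_mul_of_nonneg_left (hxb t) (pow_nonneg hr.1.le _)
      _ = (T * (c * (1 - c)⁻¹)) * q ^ t.natAbs := by
          have hqn : q ^ t.natAbs = r ^ t.natAbs * ρ⁻¹ ^ t.natAbs := by
            rw [hqdef, div_eq_mul_inv, mul_pow]
          rw [hqn]; ring
  exact ⟨x₀, ⟨hrec₀, hsub₀⟩, fun y hy => funext fun t => (H y hy.1 hy.2 t)⟩
end

section
/- Let φ ∈ {−1, 1} and let (ε_t)_{t∈ℤ} be a subexponential sequence of real numbers. Then every solution (x_t)_{t∈ℤ} of x_t = φ x_{t-1} + ε_t (t ∈ ℤ) is subexponential. -/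
theorem stmt_6 (φ : ℝ) (hφ : φ = -1 ∨ φ = 1) (ε : ℤ → ℝ) (hε : Subexp ε)
    (x : ℤ → ℝ) (hx : ∀ t : ℤ, x t = φ * x (t - 1) + ε t) :
    Subexp x := by
  have hφ1 : |φ| = 1 := by rcases hφ with h | h <;> simp [h]
  have step₁ : ∀ t : ℤ, |x t| ≤ |x (t - 1)| + |ε t| := by
    intro t
    calc |x t| = |φ * x (t - 1) + ε t| := by rw [hx t]
      _ ≤ |φ * x (t - 1)| + |ε t| := abs_add_le _ _
      _ = |x (t - 1)| + |ε t| := by rw [abs_mul, hφ1, one_mul]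
  have step₂ : ∀ t : ℤ, |x (t - 1)| ≤ |x t| + |ε t| := by
    intro t
    have h : φ * x (t - 1) = x t - ε t := by rw [hx t]; ring
    calc |x (t - 1)| = |φ * x (t - 1)| := by rw [abs_mul, hφ1, one_mul]
      _ = |x t - ε t| := by rw [h]
      _ ≤ |x t| + |ε t| := abs_sub _ _
  intro r hr
  obtain ⟨hr0, hr1⟩ := hr
  set ρ := Real.sqrt r with hρdef
  have hρ0 : 0 < ρ := Real.sqrt_pos.mpr hr0
  have hρ1 : ρ < 1 := by
    rw [hρdef, show (1:ℝ) = Real.sqrt 1 by simp]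
    exact Real.sqrt_lt_sqrt hr0.le hr1
  have hρρ : ρ * ρ = r := Real.mul_self_sqrt hr0.le
  have hsum : Summable fun s : ℤ => ρ ^ s.natAbs * |ε s| := hε ρ ⟨hρ0, hρ1⟩
  set M := ∑' s : ℤ, ρ ^ s.natAbs * |ε s| with hMdef
  have hMb : ∀ s : ℤ, ρ ^ s.natAbs * |ε s| ≤ M :=
    fun s => hsum.le_tsum s fun _ _ => by positivity
  have hM0 : 0 ≤ M := le_trans (by positivity) (hMb 0)
  have key : ∀ n : ℕ, |x n| * ρ ^ n ≤ |x 0| + n * M ∧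
      |x (-(n : ℤ))| * ρ ^ n ≤ |x 0| + n * M := by
    intro n
    induction n with
    | zero => simp
    | succ n ih =>
      obtain ⟨ih₁, ih₂⟩ := ih
      have hpow : ρ ^ (n + 1) ≤ ρ ^ n :=
        pow_le_pow_of_le_one hρ0.le hρ1.le (by omega)
      constructor
      · have h1 : |x ((n : ℤ) + 1)| ≤ |x (n : ℤ)| + |ε ((n : ℤ) + 1)| := by
          have := step₁ ((n : ℤ) + 1)
          simpa using this
        have hε1 : |ε ((n : ℤ) + 1)| * ρ ^ (n + 1) ≤ M := by
          have := hMb ((n : ℤ) + 1)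
          have hna : ((n : ℤ) + 1).natAbs = n + 1 := by omega
          rw [hna] at this
          linarith [this]
        have : |x ((n : ℤ) + 1)| * ρ ^ (n + 1)
            ≤ |x (n : ℤ)| * ρ ^ (n + 1) + |ε ((n : ℤ) + 1)| * ρ ^ (n + 1) := by
          nlinarith [pow_pos hρ0 (n + 1)]
        have hxn : |x (n : ℤ)| * ρ ^ (n + 1) ≤ |x (n : ℤ)| * ρ ^ n :=
          mul_le_mul_of_nonneg_left hpow (abs_nonneg _)
        push_cast
        push_cast at this ih₁
        nlinarith
      · have h1 : |x (-(n : ℤ) - 1)| ≤ |x (-(n : ℤ))| + |ε (-(n : ℤ))| := step₂ (-(n : ℤ))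
        have hε1 : |ε (-(n : ℤ))| * ρ ^ (n + 1) ≤ M := by
          have := hMb (-(n : ℤ))
          have hna : (-(n : ℤ)).natAbs = n := by omega
          rw [hna] at this
          have h2 : |ε (-(n : ℤ))| * ρ ^ (n + 1) ≤ |ε (-(n : ℤ))| * ρ ^ n :=
            mul_le_mul_of_nonneg_left hpow (abs_nonneg _)
          linarith
        have h3 : |x (-(n : ℤ) - 1)| * ρ ^ (n + 1)
            ≤ |x (-(n : ℤ))| * ρ ^ (n + 1) + |ε (-(n : ℤ))| * ρ ^ (n + 1) := by
          nlinarith [pow_pos hρ0 (n + 1)]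
        have hxn : |x (-(n : ℤ))| * ρ ^ (n + 1) ≤ |x (-(n : ℤ))| * ρ ^ n :=
          mul_le_mul_of_nonneg_left hpow (abs_nonneg _)
        have heq : (-(↑(n + 1) : ℤ)) = -(n : ℤ) - 1 := by push_cast; ring
        rw [heq]
        push_cast
        nlinarith
  have key' : ∀ t : ℤ, |x t| * ρ ^ t.natAbs ≤ |x 0| + t.natAbs * M := by
    intro t
    rcases le_or_gt 0 t with ht | ht
    · have := (key t.natAbs).1
      rwa [Int.natAbs_of_nonneg ht] at this
    · have := (key t.natAbs).2
      have h : -(t.natAbs : ℤ) = t := by omega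
      rwa [h] at this
  -- summable majorant
  have hmaj : Summable fun t : ℤ => ρ ^ t.natAbs * (|x 0| + t.natAbs * M) := by
    have hnat : Summable fun n : ℕ => ρ ^ n * (|x 0| + n * M) := by
      have h1 : Summable fun n : ℕ => |x 0| * ρ ^ n :=
        (summable_geometric_of_lt_one hρ0.le hρ1).mul_left _
      have h2 : Summable fun n : ℕ => M * ((n : ℝ) ^ 1 * ρ ^ n) :=
        (summable_pow_mul_geometric_of_norm_lt_one (R := ℝ) 1
          (by rw [Real.norm_eq_abs, abs_of_pos hρ0]; exact hρ1)).mul_left _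
      have := h1.add h2
      apply this.congr
      intro n
      simp
      ring
    apply Summable.of_nat_of_neg
    · apply hnat.congr; intro n; simp
    · apply hnat.congr; intro n; simp
  apply Summable.of_nonneg_of_le _ _ hmaj
  · intro t; positivity
  · intro t
    have h : r ^ t.natAbs = ρ ^ t.natAbs * ρ ^ t.natAbs := by
      rw [← mul_pow, hρρ]
    rw [h]
    have := key' t
    have hp : 0 ≤ ρ ^ t.natAbs := by positivity
    nlinarith
end

section
/- Let M be a real N×N matrix with spectral radius ρ(M) < 1 and let (ε_t)_{t∈ℤ} be a subexponential sequence in ℝ^N. Then the sequence y_t := ∑_{k=0}^∞ M^k ε_{t-k} (t ∈ ℤ) is itself subexponential, i.e. ∑_{t∈ℤ} r^{|t|} ‖y_t‖ < ∞ for every r ∈ (0,1). -/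
open Matrix Filter
open scoped Matrix.Norms.L2Operator ENNReal NNReal

lemma aux_norm (N : ℕ) (B : Matrix (Fin N) (Fin N) ℝ) (v : EuclideanSpace ℝ (Fin N)) :
    ‖Matrix.toEuclideanLin B v‖ ≤ ‖B.map (algebraMap ℝ ℂ)‖ * ‖v‖ := by
  set w : EuclideanSpace ℂ (Fin N) := (WithLp.equiv 2 _).symm (fun i => ((v i : ℝ) : ℂ)) with hw
  have hwv : ‖w‖ = ‖v‖ := by
    simp [EuclideanSpace.norm_eq, hw, Complex.norm_real]
  have hmv : (B.map (algebraMap ℝ ℂ)) *ᵥ (WithLp.equiv 2 _ w) =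
      fun i => ((B *ᵥ (WithLp.equiv 2 _ v)) i : ℂ) := by
    funext i
    simp [Matrix.mulVec, dotProduct, hw]
  have h1 : ‖Matrix.toEuclideanLin B v‖ =
      ‖(EuclideanSpace.equiv (Fin N) ℂ).symm ((B.map (algebraMap ℝ ℂ)) *ᵥ (WithLp.equiv 2 _ w))‖ := by
    rw [Matrix.toEuclideanLin_apply, hmv]
    simp [EuclideanSpace.norm_eq, Complex.norm_real]
  rw [h1, ← hwv]
  exact Matrix.l2_opNorm_mulVec _ _

lemma aux_pow (N : ℕ) (hN : 0 < N) (M : Matrix (Fin N) (Fin N) ℝ)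
    (hρ : ∀ μ ∈ spectrum ℂ (M.map (algebraMap ℝ ℂ)), ‖μ‖ < 1) :
    ∃ C : ℝ, 0 < C ∧ ∃ s : ℝ, s ∈ Set.Ioo (0:ℝ) 1 ∧
      ∀ k : ℕ, ∀ v : EuclideanSpace ℝ (Fin N),
        ‖Matrix.toEuclideanLin (M ^ k) v‖ ≤ C * s ^ k * ‖v‖ := by
  haveI : Nonempty (Fin N) := ⟨⟨0, hN⟩⟩
  set A : Matrix (Fin N) (Fin N) ℂ := M.map (algebraMap ℝ ℂ) with hA
  have hρ1 : spectralRadius ℂ A < 1 := by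
    obtain ⟨z, hz, hz'⟩ := spectrum.exists_nnnorm_eq_spectralRadius A
    rw [← hz']
    have := hρ z hz
    exact_mod_cast this
  obtain ⟨s, hρs, hs1⟩ := ENNReal.lt_iff_exists_nnreal_btwn.mp hρ1
  have hs0 : 0 < s := by
    rcases eq_or_lt_of_le (zero_le : (0:ℝ≥0) ≤ s) with h | h
    · exact absurd hρs (by simp [← h])
    · exact h
  have hgel := spectrum.pow_nnnorm_pow_one_div_tendsto_nhds_spectralRadius A
  have hev : ∀ᶠ n : ℕ in atTop, ((‖A ^ n‖₊ : ℝ≥0∞)) ^ (1 / (n:ℝ)) < (s : ℝ≥0∞) :=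
    hgel.eventually_lt_const hρs
  obtain ⟨n0, hn0⟩ := eventually_atTop.mp hev
  set n1 := max n0 1 with hn1
  have hpow : ∀ n, n1 ≤ n → ‖A ^ n‖ ≤ (s:ℝ) ^ n := by
    intro n hn
    have h1n : 1 ≤ n := le_trans (le_max_right _ _) hn
    have hne : (n:ℝ) ≠ 0 := by positivity
    have h := (hn0 n (le_trans (le_max_left _ _) hn)).le
    have h2 := ENNReal.rpow_le_rpow h (by positivity : (0:ℝ) ≤ (n:ℝ))
    rw [← ENNReal.rpow_mul, one_div, inv_mul_cancel₀ hne, ENNReal.rpow_one,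
      ENNReal.rpow_natCast, ← ENNReal.coe_pow, ENNReal.coe_le_coe] at h2
    exact_mod_cast h2
  set D : ℝ := 1 + ∑ k ∈ Finset.range n1, ‖A ^ k‖ with hD
  have hD1 : (1:ℝ) ≤ D := by
    have : 0 ≤ ∑ k ∈ Finset.range n1, ‖A ^ k‖ :=
      Finset.sum_nonneg fun _ _ => norm_nonneg _
    linarith
  set C : ℝ := D * ((s:ℝ)⁻¹) ^ n1 with hC
  have hs1' : (s:ℝ) < 1 := by exact_mod_cast hs1
  have hs0' : (0:ℝ) < s := hs0
  have hsinv : (1:ℝ) ≤ ((s:ℝ)⁻¹) ^ n1 := one_le_pow₀ ((one_le_inv₀ hs0').mpr hs1'.le)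
  have hC1 : (1:ℝ) ≤ C := by
    calc (1:ℝ) = 1 * 1 := by ring
    _ ≤ D * ((s:ℝ)⁻¹) ^ n1 := mul_le_mul hD1 hsinv zero_le_one (by linarith)
  have hAk : ∀ k : ℕ, ‖A ^ k‖ ≤ C * (s:ℝ) ^ k := by
    intro k
    rcases lt_or_ge k n1 with hk | hk
    · have h1 : ‖A ^ k‖ ≤ ∑ j ∈ Finset.range n1, ‖A ^ j‖ :=
        Finset.single_le_sum (f := fun j => ‖A ^ j‖) (fun _ _ => norm_nonneg _)
          (Finset.mem_range.mpr hk)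
      have h2 : ‖A ^ k‖ ≤ D := by rw [hD]; linarith
      have h3 : (1:ℝ) ≤ ((s:ℝ)⁻¹) ^ n1 * (s:ℝ) ^ k := by
        rw [← one_mul (1:ℝ)]
        have hsk : (s:ℝ) ^ n1 ≤ (s:ℝ) ^ k := pow_le_pow_of_le_one hs0'.le hs1'.le hk.le
        have : ((s:ℝ)⁻¹) ^ n1 * (s:ℝ) ^ n1 = 1 := by
          rw [← mul_pow, inv_mul_cancel₀ (ne_of_gt hs0'), one_pow]
        calc (1:ℝ) * 1 = ((s:ℝ)⁻¹) ^ n1 * (s:ℝ) ^ n1 := by rw [this]; ring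
        _ ≤ ((s:ℝ)⁻¹) ^ n1 * (s:ℝ) ^ k := by
            apply mul_le_mul_of_nonneg_left hsk (by positivity)
      calc ‖A ^ k‖ ≤ D * 1 := by linarith [h2]
      _ ≤ D * (((s:ℝ)⁻¹) ^ n1 * (s:ℝ) ^ k) := by
          apply mul_le_mul_of_nonneg_left h3 (by linarith)
      _ = C * (s:ℝ) ^ k := by rw [hC]; ring
    · calc ‖A ^ k‖ ≤ (s:ℝ) ^ k := hpow k hk
      _ ≤ C * (s:ℝ) ^ k := by nlinarith [pow_pos hs0' k]
  refine ⟨C, by linarith, (s:ℝ), ⟨hs0', hs1'⟩, ?_⟩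
  intro k v
  have hmap : (M ^ k).map (algebraMap ℝ ℂ) = A ^ k := by
    rw [hA]
    exact map_pow ((algebraMap ℝ ℂ).mapMatrix) M k
  calc ‖Matrix.toEuclideanLin (M ^ k) v‖ ≤ ‖(M ^ k).map (algebraMap ℝ ℂ)‖ * ‖v‖ :=
        aux_norm N (M ^ k) v
  _ = ‖A ^ k‖ * ‖v‖ := by rw [hmap]
  _ ≤ (C * (s:ℝ) ^ k) * ‖v‖ := mul_le_mul_of_nonneg_right (hAk k) (norm_nonneg _)

set_option maxHeartbeats 1000000 in
theorem stmt_8 (N : ℕ) (M : Matrix (Fin N) (Fin N) ℝ)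
    (hρ : ∀ μ ∈ spectrum ℂ (M.map (algebraMap ℝ ℂ)), ‖μ‖ < 1)
    (ε : ℤ → EuclideanSpace ℝ (Fin N))
    (hε : ∀ r ∈ Set.Ioo (0 : ℝ) 1, Summable fun t : ℤ => r ^ t.natAbs * ‖ε t‖) :
    ∀ r ∈ Set.Ioo (0 : ℝ) 1,
      Summable fun t : ℤ =>
        r ^ t.natAbs * ‖∑' k : ℕ, Matrix.toEuclideanLin (M ^ k) (ε (t - k))‖ := by
  rcases Nat.eq_zero_or_pos N with hN | hN
  · intro r hr
    subst hN
    have hz : (fun t : ℤ => r ^ t.natAbs *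
        ‖∑' k : ℕ, Matrix.toEuclideanLin (M ^ k) (ε (t - k))‖) = fun _ => 0 := by
      funext t
      have : ‖∑' k : ℕ, Matrix.toEuclideanLin (M ^ k) (ε (t - k))‖ = 0 := by
        simp [EuclideanSpace.norm_eq]
      rw [this, mul_zero]
    rw [hz]
    exact summable_zero
  intro r hr
  obtain ⟨C, hC0, s, hs, hbound⟩ := aux_pow N hN M hρ
  -- set up parameters
  set q : ℝ := max r s with hq
  have hq0 : 0 < q := lt_of_lt_of_le hr.1 (le_max_left _ _)
  have hq1 : q < 1 := max_lt hr.2 hs.2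
  set w : ℝ := Real.sqrt q with hwdef
  have hw0 : 0 < w := Real.sqrt_pos.mpr hq0
  have hw1 : w < 1 := by
    rw [hwdef, show (1:ℝ) = Real.sqrt 1 by simp]
    exact Real.sqrt_lt_sqrt hq0.le hq1
  have hww : w * w = q := Real.mul_self_sqrt hq0.le
  -- the dominating family
  set F : ℤ × ℕ → ℝ := fun p =>
    (w ^ (p.1 - p.2).natAbs * ‖ε (p.1 - p.2)‖) * (C * w ^ p.2) with hF
  have hFnn : ∀ p, 0 ≤ F p := fun p =>
    mul_nonneg (mul_nonneg (pow_nonneg hw0.le _) (norm_nonneg _))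
      (mul_nonneg hC0.le (pow_nonneg hw0.le _))
  -- Summability of F via the shear equivalence
  have hmul : Summable fun p : ℤ × ℕ =>
      (w ^ p.1.natAbs * ‖ε p.1‖) * (C * w ^ p.2) :=
    Summable.mul_of_nonneg (hε w ⟨hw0, hw1⟩)
      ((summable_geometric_of_lt_one hw0.le hw1).mul_left C)
      (fun u => mul_nonneg (pow_nonneg hw0.le _) (norm_nonneg _))
      (fun k => mul_nonneg hC0.le (pow_nonneg hw0.le _))
  let e : ℤ × ℕ ≃ ℤ × ℕ :=
    { toFun := fun p => (p.1 + p.2, p.2)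
      invFun := fun p => (p.1 - p.2, p.2)
      left_inv := fun p => by simp
      right_inv := fun p => by simp }
  have hFsummable : Summable F := by
    rw [← e.summable_iff]
    have : (F ∘ e) = fun p : ℤ × ℕ => (w ^ p.1.natAbs * ‖ε p.1‖) * (C * w ^ p.2) := by
      funext p
      simp [hF, e, Function.comp]
    rw [this]
    exact hmul
  have hF1 : ∀ t : ℤ, Summable fun k : ℕ => F (t, k) := fun t => hFsummable.prod_factor t
  have hF2 : Summable fun t : ℤ => ∑' k : ℕ, F (t, k) :=
    ((summable_prod_of_nonneg hFnn).mp hFsummable).2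
  -- core numeric inequality
  have hcore : ∀ (t : ℤ) (k : ℕ),
      r ^ t.natAbs * (C * s ^ k * ‖ε (t - k)‖) ≤ F (t, k) := by
    intro t k
    have h1 : r ^ t.natAbs * s ^ k ≤ w ^ (t - (k:ℤ)).natAbs * w ^ k := by
      have hrq : r ^ t.natAbs ≤ q ^ t.natAbs :=
        pow_le_pow_left₀ hr.1.le (le_max_left _ _) _
      have hsq : s ^ k ≤ q ^ k := pow_le_pow_left₀ hs.1.le (le_max_right _ _) _
      have h2 : q ^ t.natAbs * q ^ k = w ^ (t.natAbs + k) * w ^ (t.natAbs + k) := by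
        rw [← pow_add, ← mul_pow, hww]
      have hle1 : (t - (k:ℤ)).natAbs ≤ t.natAbs + k := by
        have := Int.natAbs_sub_le t (k:ℤ)
        simpa using this
      have h3 : w ^ (t.natAbs + k) ≤ w ^ (t - (k:ℤ)).natAbs :=
        pow_le_pow_of_le_one hw0.le hw1.le hle1
      have h4 : w ^ (t.natAbs + k) ≤ w ^ k :=
        pow_le_pow_of_le_one hw0.le hw1.le (Nat.le_add_left _ _)
      calc r ^ t.natAbs * s ^ k ≤ q ^ t.natAbs * q ^ k :=
            mul_le_mul hrq hsq (pow_nonneg hs.1.le _) (pow_nonneg hq0.le _)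
      _ = w ^ (t.natAbs + k) * w ^ (t.natAbs + k) := h2
      _ ≤ w ^ (t - (k:ℤ)).natAbs * w ^ k :=
            mul_le_mul h3 h4 (pow_nonneg hw0.le _) (pow_nonneg hw0.le _)
    have : r ^ t.natAbs * (C * s ^ k * ‖ε (t - k)‖)
        = (r ^ t.natAbs * s ^ k) * (C * ‖ε (t - k)‖) := by ring
    rw [this]
    have hFtk : F (t, k) = (w ^ (t - (k:ℤ)).natAbs * w ^ k) * (C * ‖ε (t - k)‖) := by
      simp only [hF]; ring
    rw [hFtk]
    exact mul_le_mul_of_nonneg_right h1 (mul_nonneg hC0.le (norm_nonneg _))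
  -- per-t facts
  have hrpos : ∀ t : ℤ, (0:ℝ) < r ^ t.natAbs := fun t => pow_pos hr.1 _
  have hsum_bound : ∀ t : ℤ, Summable fun k : ℕ => C * s ^ k * ‖ε (t - k)‖ := by
    intro t
    refine Summable.of_nonneg_of_le
      (fun k => mul_nonneg (mul_nonneg hC0.le (pow_nonneg hs.1.le _)) (norm_nonneg _))
      (fun k => ?_) ((hF1 t).mul_left (r ^ t.natAbs)⁻¹)
    have h2 := mul_le_mul_of_nonneg_left (hcore t k) (inv_nonneg.mpr (hrpos t).le)
    rwa [← mul_assoc, inv_mul_cancel₀ (ne_of_gt (hrpos t)), one_mul] at h2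
  have hsum_norm : ∀ t : ℤ,
      Summable fun k : ℕ => ‖Matrix.toEuclideanLin (M ^ k) (ε (t - k))‖ := by
    intro t
    exact Summable.of_nonneg_of_le (fun k => norm_nonneg _)
      (fun k => hbound k (ε (t - k))) (hsum_bound t)
  -- final comparison
  apply Summable.of_nonneg_of_le
    (fun t => mul_nonneg (pow_nonneg hr.1.le _) (norm_nonneg _)) _ hF2
  intro t
  calc r ^ t.natAbs * ‖∑' k : ℕ, Matrix.toEuclideanLin (M ^ k) (ε (t - k))‖
      ≤ r ^ t.natAbs * ∑' k : ℕ, ‖Matrix.toEuclideanLin (M ^ k) (ε (t - k))‖ :=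
        mul_le_mul_of_nonneg_left (norm_tsum_le_tsum_norm (hsum_norm t)) (hrpos t).le
  _ = ∑' k : ℕ, r ^ t.natAbs * ‖Matrix.toEuclideanLin (M ^ k) (ε (t - k))‖ :=
        (tsum_mul_left).symm
  _ ≤ ∑' k : ℕ, F (t, k) := by
      apply Summable.tsum_le_tsum _ ((hsum_norm t).mul_left _) (hF1 t)
      intro k
      calc r ^ t.natAbs * ‖Matrix.toEuclideanLin (M ^ k) (ε (t - k))‖
          ≤ r ^ t.natAbs * (C * s ^ k * ‖ε (t - k)‖) :=
            mul_le_mul_of_nonneg_left (hbound k (ε (t - k))) (hrpos t).le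
      _ ≤ F (t, k) := hcore t k
end

section
/- Let Φ be a real N×N matrix with all eigenvalues of modulus strictly greater than 1 (hence Φ invertible), and let (ε_t)_{t∈ℤ} be a subexponential sequence in ℝ^N. Then a sequence (x_t)_{t∈ℤ} in ℝ^N satisfies x_t = Φ x_{t-1} + ε_t for all t ∈ ℤ if and only if there exists v ∈ ℝ^N with x_t = Φ^t v − ∑_{k=1}^∞ Φ^{-k} ε_{t+k} for all t ∈ ℤ; moreover v = lim_{n→∞} Φ^{-n} x_n is unique, and v = 0 whenever (x_t) is subexponential. -/
open Matrix Filter Topology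
open scoped NNReal ENNReal


lemma geo_general {A : Type*} [NormedRing A] [NormedAlgebra ℂ A] [CompleteSpace A]
    (a : A) (h : spectralRadius ℂ a < 1) :
    ∃ C > 0, ∃ ρ ∈ Set.Ioo (0:ℝ) 1, ∀ m : ℕ, ‖a ^ m‖ ≤ C * ρ ^ m := by
  obtain ⟨ρ₀, hρ₀, hρ₁⟩ := ENNReal.lt_iff_exists_nnreal_btwn.mp h
  set ρ : ℝ≥0 := max ρ₀ (1/2) with hρdef
  have hρlt1 : (ρ : ℝ≥0∞) < 1 := by
    rw [hρdef]; push_cast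
    exact max_lt hρ₁ (by norm_num)
  have hρgt : spectralRadius ℂ a < (ρ : ℝ≥0∞) :=
    lt_of_lt_of_le hρ₀ (by exact_mod_cast le_max_left _ _)
  have hρpos : (0:ℝ) < ρ := lt_of_lt_of_le (by norm_num) (le_max_right _ _)
  have hρlt1' : (ρ:ℝ) < 1 := by exact_mod_cast hρlt1
  have hev : ∀ᶠ n : ℕ in atTop, (‖a ^ n‖₊ : ℝ≥0∞) ^ (1/(n:ℝ)) < (ρ : ℝ≥0∞) :=
    (spectrum.pow_nnnorm_pow_one_div_tendsto_nhds_spectralRadius a).eventually_lt_const hρgt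
  obtain ⟨n₀, hn₀⟩ := (hev.and (eventually_ge_atTop 1)).exists_forall_of_atTop
  have key : ∀ n, n₀ ≤ n → ‖a ^ n‖ ≤ (ρ:ℝ) ^ n := by
    intro n hn
    obtain ⟨h1, h2⟩ := hn₀ n hn
    have hnz : ((n:ℝ)) ≠ 0 := Nat.cast_ne_zero.mpr (by omega)
    have h3 : ((‖a ^ n‖₊ : ℝ≥0∞) ^ (1/(n:ℝ))) ^ (n:ℝ) ≤ (ρ : ℝ≥0∞) ^ (n:ℝ) :=
      ENNReal.rpow_le_rpow h1.le (by positivity)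
    rw [← ENNReal.rpow_mul, one_div, inv_mul_cancel₀ hnz, ENNReal.rpow_one,
      ENNReal.rpow_natCast] at h3
    have h4 : ‖a ^ n‖₊ ≤ ρ ^ n := by exact_mod_cast h3
    calc ‖a ^ n‖ = ((‖a ^ n‖₊ : ℝ≥0) : ℝ) := rfl
    _ ≤ ((ρ ^ n : ℝ≥0) : ℝ) := by exact_mod_cast h4
    _ = (ρ:ℝ) ^ n := by push_cast; ring
  set C : ℝ := 1 + ∑ i ∈ Finset.range n₀, ‖a ^ i‖ / (ρ:ℝ) ^ i with hC
  have hsum_nonneg : (0:ℝ) ≤ ∑ i ∈ Finset.range n₀, ‖a ^ i‖ / (ρ:ℝ) ^ i :=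
    Finset.sum_nonneg fun i _ => by positivity
  have hC1 : (1:ℝ) ≤ C := by rw [hC]; linarith
  refine ⟨C, by linarith, ρ, ⟨hρpos, hρlt1'⟩, fun m => ?_⟩
  rcases le_or_gt n₀ m with hm | hm
  · calc ‖a ^ m‖ ≤ (ρ:ℝ) ^ m := key m hm
    _ = 1 * (ρ:ℝ) ^ m := by ring
    _ ≤ C * (ρ:ℝ) ^ m := by
        apply mul_le_mul_of_nonneg_right hC1 (by positivity)
  · have hterm : ‖a ^ m‖ / (ρ:ℝ) ^ m ≤ C := by
      rw [hC]
      have : ‖a ^ m‖ / (ρ:ℝ) ^ m ≤ ∑ i ∈ Finset.range n₀, ‖a ^ i‖ / (ρ:ℝ) ^ i :=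
        Finset.single_le_sum (f := fun i => ‖a ^ i‖ / (ρ:ℝ) ^ i)
          (fun i _ => by positivity) (Finset.mem_range.mpr hm)
      linarith
    have := mul_le_mul_of_nonneg_right hterm (le_of_lt (pow_pos hρpos m))
    rwa [div_mul_cancel₀] at this
    positivity


lemma norm_transfer {N : ℕ} (M : Matrix (Fin N) (Fin N) ℝ) (w : EuclideanSpace ℝ (Fin N)) :
    ‖Matrix.toEuclideanCLM (𝕜 := ℝ) M w‖ ≤
      ‖Matrix.toEuclideanCLM (𝕜 := ℂ) (M.map (algebraMap ℝ ℂ))‖ * ‖w‖ := by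
  set wC : EuclideanSpace ℂ (Fin N) :=
    (WithLp.equiv 2 _).symm (fun i => ((w i : ℝ) : ℂ)) with hwC
  have hcoord : ∀ i, (Matrix.toEuclideanCLM (𝕜 := ℂ) (M.map (algebraMap ℝ ℂ)) wC) i
      = ((Matrix.toEuclideanCLM (𝕜 := ℝ) M w) i : ℂ) := by
    intro i
    have h1 := congrFun (Matrix.ofLp_toEuclideanCLM (M.map (algebraMap ℝ ℂ)) wC) i
    have h2 := congrFun (Matrix.ofLp_toEuclideanCLM M w) i
    simp only [Matrix.toLin'_apply, Matrix.mulVec, dotProduct,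
      WithLp.equiv_symm_apply, PiLp.toLp_apply, Matrix.map_apply, hwC] at h1 h2 ⊢
    rw [h1, h2]
    push_cast
    rfl
  have hnw : ‖wC‖ = ‖w‖ := by
    rw [EuclideanSpace.norm_eq, EuclideanSpace.norm_eq]
    congr 1
    apply Finset.sum_congr rfl
    intro i _
    rw [hwC]
    simp [WithLp.equiv_symm_apply, PiLp.toLp_apply, Complex.norm_real]
  have heq : ‖Matrix.toEuclideanCLM (𝕜 := ℂ) (M.map (algebraMap ℝ ℂ)) wC‖
      = ‖Matrix.toEuclideanCLM (𝕜 := ℝ) M w‖ := by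
    rw [EuclideanSpace.norm_eq, EuclideanSpace.norm_eq]
    congr 1
    apply Finset.sum_congr rfl
    intro i _
    rw [hcoord i, Complex.norm_real]
  calc ‖Matrix.toEuclideanCLM (𝕜 := ℝ) M w‖
      = ‖Matrix.toEuclideanCLM (𝕜 := ℂ) (M.map (algebraMap ℝ ℂ)) wC‖ := heq.symm
    _ ≤ ‖Matrix.toEuclideanCLM (𝕜 := ℂ) (M.map (algebraMap ℝ ℂ))‖ * ‖wC‖ :=
        ContinuousLinearMap.le_opNorm _ _
    _ = _ := by rw [hnw]

open scoped Matrix.Norms.L2Operator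

section
variable {N : ℕ}

lemma isUnit_map (Φ : Matrix (Fin N) (Fin N) ℝ)
    (hΦ : ∀ μ ∈ spectrum ℂ (Φ.map (algebraMap ℝ ℂ)), 1 < ‖μ‖) :
    IsUnit (Φ.map (algebraMap ℝ ℂ)) := by
  by_contra h
  have h0 : (0:ℂ) ∈ spectrum ℂ (Φ.map (algebraMap ℝ ℂ)) := (spectrum.zero_mem_iff (R := ℂ)).mpr h
  exact absurd (hΦ 0 h0) (by norm_num)

lemma isUnit_det (Φ : Matrix (Fin N) (Fin N) ℝ)
    (hΦ : ∀ μ ∈ spectrum ℂ (Φ.map (algebraMap ℝ ℂ)), 1 < ‖μ‖) :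
    IsUnit Φ.det := by
  have h := (Matrix.isUnit_iff_isUnit_det _).mp (isUnit_map Φ hΦ)
  have hd : (Φ.map (algebraMap ℝ ℂ)).det = algebraMap ℝ ℂ Φ.det := (RingHom.map_det _ _).symm
  rw [hd] at h
  have : Φ.det ≠ 0 := by
    intro h0
    rw [h0, map_zero] at h
    exact not_isUnit_zero h
  exact isUnit_iff_ne_zero.mpr this

lemma spectral_lt (hN : 0 < N) (Φ : Matrix (Fin N) (Fin N) ℝ)
    (hΦ : ∀ μ ∈ spectrum ℂ (Φ.map (algebraMap ℝ ℂ)), 1 < ‖μ‖) :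
    spectralRadius ℂ ((Φ.map (algebraMap ℝ ℂ))⁻¹) < 1 := by
  haveI : Nonempty (Fin N) := Fin.pos_iff_nonempty.mp hN
  obtain ⟨u, hu⟩ := isUnit_map Φ hΦ
  have ha : (Φ.map (algebraMap ℝ ℂ))⁻¹ = ((u⁻¹ : _ˣ) : Matrix (Fin N) (Fin N) ℂ) := by
    rw [← hu, ← Matrix.coe_units_inv]
  rw [ha]
  have hspec : ∀ μ ∈ spectrum ℂ (((u⁻¹:_ˣ):Matrix (Fin N) (Fin N) ℂ)), ‖μ‖₊ < 1 := by
    intro μ hμ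
    have hμ0 : μ ≠ 0 := by
      intro h0
      rw [h0] at hμ
      exact ((spectrum.zero_mem_iff (R := ℂ)).mp hμ) (u⁻¹).isUnit
    have hmem := (spectrum.inv_mem_iff (r := Units.mk0 μ hμ0) (a := u⁻¹)).mp hμ
    rw [inv_inv] at hmem
    have hmem2 : (μ⁻¹ : ℂ) ∈ spectrum ℂ ((u : Matrix (Fin N) (Fin N) ℂ)) := by
      simpa using hmem
    rw [hu] at hmem2
    have h1 : 1 < ‖μ⁻¹‖ := hΦ _ hmem2
    have habs : ‖μ‖ < 1 := by
      rw [norm_inv] at h1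
      have hpos : 0 < ‖μ‖ := norm_pos_iff.mpr hμ0
      rw [lt_inv_comm₀ (by norm_num) hpos] at h1
      simpa using h1
    have : ‖μ‖ < 1 := habs
    exact_mod_cast this
  exact spectrum.spectralRadius_lt_of_forall_lt _ hspec

end

section
open scoped Matrix.Norms.L2Operator

lemma geo_bound {N : ℕ} (hN : 0 < N) (Φ : Matrix (Fin N) (Fin N) ℝ)
    (hΦ : ∀ μ ∈ spectrum ℂ (Φ.map (algebraMap ℝ ℂ)), 1 < ‖μ‖) :
    ∃ C > 0, ∃ ρ ∈ Set.Ioo (0:ℝ) 1, ∀ (m : ℕ) (w : EuclideanSpace ℝ (Fin N)),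
      ‖Matrix.toEuclideanCLM (𝕜 := ℝ) ((Φ ^ m)⁻¹) w‖ ≤ C * ρ ^ m * ‖w‖ := by
  set f := algebraMap ℝ ℂ
  set a : Matrix (Fin N) (Fin N) ℂ := (Φ.map f)⁻¹ with ha
  obtain ⟨C, hC, ρ, hρ, hgeo⟩ := geo_general a (spectral_lt hN Φ hΦ)
  refine ⟨C, hC, ρ, hρ, fun m w => ?_⟩
  have hdet : IsUnit (Φ ^ m).det := by
    rw [Matrix.det_pow]; exact (isUnit_det Φ hΦ).pow m
  have hpow : (Φ ^ m).map f = (Φ.map f) ^ m := by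
    have := map_pow (f.mapMatrix) Φ m
    simpa [RingHom.mapMatrix_apply] using this
  have hinv : ((Φ ^ m)⁻¹).map f = a ^ m := by
    have hleft : ((Φ ^ m)⁻¹).map f * (Φ ^ m).map f = 1 := by
      rw [← Matrix.map_mul, Matrix.nonsing_inv_mul _ hdet, Matrix.map_one f (map_zero f) (map_one f)]
    have h2 : a ^ m = ((Φ ^ m).map f)⁻¹ := by rw [ha, Matrix.inv_pow', hpow]
    rw [h2]
    exact (Matrix.inv_eq_left_inv hleft).symm
  calc ‖Matrix.toEuclideanCLM (𝕜 := ℝ) ((Φ ^ m)⁻¹) w‖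
      ≤ ‖Matrix.toEuclideanCLM (𝕜 := ℂ) (((Φ ^ m)⁻¹).map f)‖ * ‖w‖ := norm_transfer _ _
    _ = ‖a ^ m‖ * ‖w‖ := by rw [hinv, Matrix.cstar_norm_def]
    _ ≤ (C * ρ ^ m) * ‖w‖ := by
        apply mul_le_mul_of_nonneg_right (hgeo m) (norm_nonneg _)

end

lemma stmt18_growth {N : ℕ} {f : ℤ → EuclideanSpace ℝ (Fin N)} {s : ℝ}
    (hs : s ∈ Set.Ioo (0:ℝ) 1) (hf : Summable fun t : ℤ => s ^ t.natAbs * ‖f t‖) :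
    ∃ D > 0, ∀ t : ℤ, ‖f t‖ ≤ D * s⁻¹ ^ t.natAbs := by
  obtain ⟨hs0, hs1⟩ := hs
  set D : ℝ := (∑' t : ℤ, s ^ t.natAbs * ‖f t‖) + 1 with hD
  have htsum_nonneg : 0 ≤ ∑' t : ℤ, s ^ t.natAbs * ‖f t‖ :=
    tsum_nonneg fun t => by positivity
  refine ⟨D, by rw [hD]; linarith, fun t => ?_⟩
  have h1 : s ^ t.natAbs * ‖f t‖ ≤ D := by
    have := hf.le_tsum t (fun _ _ => by positivity)
    rw [hD]; linarith
  calc ‖f t‖ = (s ^ t.natAbs)⁻¹ * (s ^ t.natAbs * ‖f t‖) := by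
        rw [← mul_assoc, inv_mul_cancel₀ (by positivity), one_mul]
    _ ≤ (s ^ t.natAbs)⁻¹ * D := by
        apply mul_le_mul_of_nonneg_left h1 (by positivity)
    _ = D * s⁻¹ ^ t.natAbs := by rw [inv_pow]; ring

theorem stmt_18 (N : ℕ) (Φ : Matrix (Fin N) (Fin N) ℝ)
    (hΦ : ∀ μ ∈ spectrum ℂ (Φ.map (algebraMap ℝ ℂ)), 1 < ‖μ‖)
    (ε : ℤ → EuclideanSpace ℝ (Fin N))
    (hε : ∀ r ∈ Set.Ioo (0 : ℝ) 1, Summable fun t : ℤ => r ^ t.natAbs * ‖ε t‖)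
    (x : ℤ → EuclideanSpace ℝ (Fin N)) :
    ((∀ t : ℤ, x t = Matrix.toEuclideanLin Φ (x (t - 1)) + ε t) ↔
      ∃ v : EuclideanSpace ℝ (Fin N), ∀ t : ℤ,
        x t = Matrix.toEuclideanLin (Φ ^ t) v -
          ∑' k : ℕ, Matrix.toEuclideanLin (Φ ^ (-(k : ℤ) - 1)) (ε (t + k + 1))) ∧
    ((∀ t : ℤ, x t = Matrix.toEuclideanLin Φ (x (t - 1)) + ε t) →
      ∀ v : EuclideanSpace ℝ (Fin N),
        (∀ t : ℤ, x t = Matrix.toEuclideanLin (Φ ^ t) v -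
          ∑' k : ℕ, Matrix.toEuclideanLin (Φ ^ (-(k : ℤ) - 1)) (ε (t + k + 1))) →
        Tendsto (fun n : ℕ => Matrix.toEuclideanLin (Φ ^ (-(n : ℤ))) (x n)) atTop (𝓝 v) ∧
        ((∀ r ∈ Set.Ioo (0 : ℝ) 1, Summable fun t : ℤ => r ^ t.natAbs * ‖x t‖) → v = 0)) := by
  rcases Nat.eq_zero_or_pos N with hN | hN
  · -- trivial case N = 0
    subst hN
    haveI : Subsingleton (EuclideanSpace ℝ (Fin 0)) :=
      ⟨fun a b => PiLp.ext fun i => Fin.elim0 i⟩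
    refine ⟨⟨fun _ => ⟨0, fun t => Subsingleton.elim _ _⟩,
      fun _ t => Subsingleton.elim _ _⟩, fun _ v _ => ⟨?_, fun _ => Subsingleton.elim _ _⟩⟩
    have hfe : (fun n : ℕ => Matrix.toEuclideanLin (Φ ^ (-(n : ℤ))) (x n)) = fun _ => v :=
      funext fun n => Subsingleton.elim _ _
    rw [hfe]
    exact tendsto_const_nhds
  · -- main case
    have hdet : IsUnit Φ.det := isUnit_det Φ hΦ
    obtain ⟨C, hC, ρ, ⟨hρ0, hρ1⟩, hgeo⟩ := geo_bound hN Φ hΦ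
    set s : ℝ := (ρ + 1) / 2 with hs
    have hs0 : 0 < s := by rw [hs]; linarith
    have hs1 : s < 1 := by rw [hs]; linarith
    have hρs : ρ < s := by rw [hs]; linarith
    set q : ℝ := ρ / s with hqdef
    have hq0 : 0 < q := div_pos hρ0 hs0
    have hq1 : q < 1 := (div_lt_one hs0).mpr hρs
    obtain ⟨D, hD, hεD⟩ := stmt18_growth ⟨hs0, hs1⟩ (hε s ⟨hs0, hs1⟩)
    have hsinv1 : (1:ℝ) ≤ s⁻¹ := (one_le_inv₀ hs0).mpr hs1.le
    -- abbreviations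
    have hlin : ∀ (M : Matrix (Fin N) (Fin N) ℝ) (y : EuclideanSpace ℝ (Fin N)),
        Matrix.toEuclideanLin M y = Matrix.toEuclideanCLM (𝕜 := ℝ) M y := fun _ _ => rfl
    have hmul : ∀ (A B : Matrix (Fin N) (Fin N) ℝ) (y : EuclideanSpace ℝ (Fin N)),
        Matrix.toEuclideanCLM (𝕜 := ℝ) (A * B) y
          = Matrix.toEuclideanCLM (𝕜 := ℝ) A (Matrix.toEuclideanCLM (𝕜 := ℝ) B y) := by
      intro A B y
      rw [_root_.map_mul]
      rfl
    have hone : ∀ (y : EuclideanSpace ℝ (Fin N)),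
        Matrix.toEuclideanCLM (𝕜 := ℝ) (1 : Matrix (Fin N) (Fin N) ℝ) y = y := by
      intro y
      rw [_root_.map_one]
      rfl
    -- geometric bound for zpow of negative naturals
    have hz : ∀ (m : ℕ) (w : EuclideanSpace ℝ (Fin N)),
        ‖Matrix.toEuclideanCLM (𝕜 := ℝ) (Φ ^ (-(m:ℤ))) w‖ ≤ C * ρ ^ m * ‖w‖ := by
      intro m w
      rw [Matrix.zpow_neg_natCast]
      exact hgeo m w
    -- the building-block sequence
    set g : ℤ → ℕ → EuclideanSpace ℝ (Fin N) :=
      fun t k => Matrix.toEuclideanCLM (𝕜 := ℝ) (Φ ^ (-(k:ℤ))) (ε (t + k)) with hg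
    have hgnorm : ∀ (t : ℤ) (k : ℕ), ‖g t k‖ ≤ (C * D * s⁻¹ ^ t.natAbs) * q ^ k := by
      intro t k
      have h1 : ‖g t k‖ ≤ C * ρ ^ k * ‖ε (t + k)‖ := hz k _
      have h2 : ‖ε (t + k)‖ ≤ D * s⁻¹ ^ (t + (k:ℤ)).natAbs := hεD _
      have h3 : (t + (k:ℤ)).natAbs ≤ t.natAbs + k := by
        calc (t + (k:ℤ)).natAbs ≤ t.natAbs + (k:ℤ).natAbs := Int.natAbs_add_le t k
        _ = t.natAbs + k := by rw [Int.natAbs_natCast]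
      have h4 : s⁻¹ ^ (t + (k:ℤ)).natAbs ≤ s⁻¹ ^ (t.natAbs + k) :=
        pow_le_pow_right₀ hsinv1 h3
      have h5 : ‖ε (t + k)‖ ≤ D * s⁻¹ ^ (t.natAbs + k) := by
        refine h2.trans ?_
        apply mul_le_mul_of_nonneg_left h4 hD.le
      calc ‖g t k‖ ≤ C * ρ ^ k * (D * s⁻¹ ^ (t.natAbs + k)) := by
            refine h1.trans ?_
            apply mul_le_mul_of_nonneg_left h5 (by positivity)
        _ = (C * D * s⁻¹ ^ t.natAbs) * q ^ k := by
            rw [hqdef, div_pow, pow_add]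
            field_simp
            ring
            rw [← mul_pow, mul_inv_cancel₀ hs0.ne', one_pow]
    have hgsum : ∀ t : ℤ, Summable (g t) := by
      intro t
      refine Summable.of_norm_bounded
        ((summable_geometric_of_lt_one hq0.le hq1).mul_left (C * D * s⁻¹ ^ t.natAbs)) (hgnorm t)
    set S : ℤ → EuclideanSpace ℝ (Fin N) := fun t => ∑' k : ℕ, g t (k + 1) with hS
    have hSsum : ∀ t : ℤ, Summable (fun k : ℕ => g t (k + 1)) := by
      intro t
      exact (summable_nat_add_iff 1).mpr (hgsum t)
    -- the series in the statement equals S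
    have hmatch : ∀ t : ℤ,
        (∑' k : ℕ, Matrix.toEuclideanLin (Φ ^ (-(k : ℤ) - 1)) (ε (t + k + 1))) = S t := by
      intro t
      rw [hS]
      apply tsum_congr
      intro k
      rw [hlin, hg]
      beta_reduce
      have e1 : (-(((k+1) : ℕ) : ℤ)) = -(k:ℤ) - 1 := by push_cast; ring
      have e2 : t + (((k+1) : ℕ) : ℤ) = t + k + 1 := by push_cast; ring
      rw [e1, e2]
    -- the recurrence satisfied by S
    have hSrec : ∀ t : ℤ, Matrix.toEuclideanCLM (𝕜 := ℝ) Φ (S (t - 1)) = ε t + S t := by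
      intro t
      have hterm : ∀ k : ℕ, Matrix.toEuclideanCLM (𝕜 := ℝ) Φ (g (t-1) (k+1)) = g t k := by
        intro k
        rw [hg]
        rw [← hmul]
        have e1 : Φ * Φ ^ (-(((k+1):ℕ):ℤ)) = Φ ^ (-(k:ℤ)) := by
          have h := Matrix.zpow_add hdet 1 (-(((k+1):ℕ):ℤ))
          rw [zpow_one] at h
          rw [← h]
          congr 1
          push_cast
          ring
        have e2 : t - 1 + (((k+1):ℕ):ℤ) = t + (k:ℤ) := by push_cast; ring
        rw [e1, e2]
      have hmap : Matrix.toEuclideanCLM (𝕜 := ℝ) Φ (S (t-1)) = ∑' k : ℕ, g t k := by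
        rw [hS]
        rw [ContinuousLinearMap.map_tsum _ (hSsum (t-1))]
        exact tsum_congr hterm
      rw [hmap, (hgsum t).tsum_eq_zero_add]
      have h0 : g t 0 = ε t := by
        simp only [hg, Nat.cast_zero, neg_zero, zpow_zero, add_zero]
        exact hone _
      show g t 0 + S t = ε t + S t
      rw [h0]
    have hqpow : ∀ m : ℕ, ρ ^ m * s⁻¹ ^ m = q ^ m := by
      intro m
      rw [hqdef, div_pow, division_def, inv_pow]
    -- conserved quantity step
    have hstep : (∀ t : ℤ, x t = Matrix.toEuclideanLin Φ (x (t - 1)) + ε t) →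
        ∀ t : ℤ, Matrix.toEuclideanCLM (𝕜 := ℝ) (Φ ^ (-t)) (x t + S t)
          = Matrix.toEuclideanCLM (𝕜 := ℝ) (Φ ^ (-(t-1))) (x (t-1) + S (t-1)) := by
      intro hrec t
      have h1 : x t + S t = Matrix.toEuclideanCLM (𝕜 := ℝ) Φ (x (t-1) + S (t-1)) := by
        rw [hrec t, hlin, _root_.map_add, hSrec t]
        abel
      rw [h1, ← hmul]
      have e1 : Φ ^ (-t) * Φ = Φ ^ (-(t-1)) := by
        have h := Matrix.zpow_add hdet (-t) 1
        rw [zpow_one] at h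
        rw [← h]
        congr 1
        ring
      rw [e1]
    have hconst : (∀ t : ℤ, x t = Matrix.toEuclideanLin Φ (x (t - 1)) + ε t) →
        ∀ t : ℤ, Matrix.toEuclideanCLM (𝕜 := ℝ) (Φ ^ (-t)) (x t + S t) = x 0 + S 0 := by
      intro hrec t
      induction t using Int.induction_on with
      | zero => rw [neg_zero, zpow_zero]; exact hone _
      | succ i ih =>
        have h := hstep hrec ((i:ℤ)+1)
        rw [show ((i:ℤ)+1) - 1 = (i:ℤ) by ring] at h
        rw [h]
        exact ih
      | pred i ih =>
        have h := hstep hrec (-(i:ℤ))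
        exact h.symm.trans ih
    have hforward : (∀ t : ℤ, x t = Matrix.toEuclideanLin Φ (x (t - 1)) + ε t) →
        ∀ t : ℤ, x t = Matrix.toEuclideanCLM (𝕜 := ℝ) (Φ ^ t) (x 0 + S 0) - S t := by
      intro hrec t
      have h2 := congrArg (Matrix.toEuclideanCLM (𝕜 := ℝ) (Φ ^ t)) (hconst hrec t)
      rw [← hmul] at h2
      have e1 : Φ ^ t * Φ ^ (-t) = 1 := by
        rw [← Matrix.zpow_add hdet]
        simp
      rw [e1, hone] at h2
      exact eq_sub_of_add_eq h2
    have hbackward : ∀ v : EuclideanSpace ℝ (Fin N),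
        (∀ t : ℤ, x t = Matrix.toEuclideanCLM (𝕜 := ℝ) (Φ ^ t) v - S t) →
        ∀ t : ℤ, x t = Matrix.toEuclideanLin Φ (x (t - 1)) + ε t := by
      intro v hv t
      rw [hlin, hv t, hv (t-1), _root_.map_sub, ← hmul, hSrec t]
      have e1 : Φ * Φ ^ (t-1) = Φ ^ t := by
        have h := Matrix.zpow_add hdet 1 (t-1)
        rw [zpow_one] at h
        rw [← h]
        congr 1
        ring
      rw [e1]
      abel
    have hUn : ∀ v : EuclideanSpace ℝ (Fin N),
        (∀ t : ℤ, x t = Matrix.toEuclideanCLM (𝕜 := ℝ) (Φ ^ t) v - S t) →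
        ∀ n : ℕ, Matrix.toEuclideanLin (Φ ^ (-(n:ℤ))) (x n)
          = v - Matrix.toEuclideanCLM (𝕜 := ℝ) (Φ ^ (-(n:ℤ))) (S n) := by
      intro v hv n
      rw [hlin, hv (n:ℤ), _root_.map_sub, ← hmul]
      have e1 : Φ ^ (-(n:ℤ)) * Φ ^ ((n:ℤ)) = 1 := by
        rw [← Matrix.zpow_add hdet]
        simp
      rw [e1, hone]
    have hSn : ∀ n : ℕ, ‖Matrix.toEuclideanCLM (𝕜 := ℝ) (Φ ^ (-(n:ℤ))) (S n)‖
        ≤ (C * D * (1-q)⁻¹ * q) * q ^ n := by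
      intro n
      have hterm : ∀ k : ℕ, Matrix.toEuclideanCLM (𝕜 := ℝ) (Φ ^ (-(n:ℤ))) (g (n:ℤ) (k+1))
          = Matrix.toEuclideanCLM (𝕜 := ℝ) (Φ ^ (-(((n+k+1):ℕ):ℤ))) (ε (((n+k+1):ℕ):ℤ)) := by
        intro k
        rw [hg]
        beta_reduce
        rw [← hmul]
        have e1 : Φ ^ (-(n:ℤ)) * Φ ^ (-(((k+1):ℕ):ℤ)) = Φ ^ (-(((n+k+1):ℕ):ℤ)) := by
          rw [← Matrix.zpow_add hdet]
          congr 1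
          push_cast
          ring
        have e2 : (n:ℤ) + (((k+1):ℕ):ℤ) = (((n+k+1):ℕ):ℤ) := by push_cast; ring
        rw [e1, e2]
      have hmap : Matrix.toEuclideanCLM (𝕜 := ℝ) (Φ ^ (-(n:ℤ))) (S n)
          = ∑' k : ℕ, Matrix.toEuclideanCLM (𝕜 := ℝ) (Φ ^ (-(((n+k+1):ℕ):ℤ)))
              (ε (((n+k+1):ℕ):ℤ)) := by
        rw [hS]
        rw [ContinuousLinearMap.map_tsum _ (hSsum (n:ℤ))]
        exact tsum_congr hterm
      rw [hmap]
      have hnorm_each : ∀ k : ℕ,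
          ‖Matrix.toEuclideanCLM (𝕜 := ℝ) (Φ ^ (-(((n+k+1):ℕ):ℤ))) (ε (((n+k+1):ℕ):ℤ))‖
            ≤ (C * D * q ^ (n+1)) * q ^ k := by
        intro k
        have h1 := hz (n+k+1) (ε (((n+k+1):ℕ):ℤ))
        have h2 : ‖ε (((n+k+1):ℕ):ℤ)‖ ≤ D * s⁻¹ ^ (n+k+1) := by
          have := hεD (((n+k+1):ℕ):ℤ)
          rwa [Int.natAbs_natCast] at this
        calc ‖Matrix.toEuclideanCLM (𝕜 := ℝ) (Φ ^ (-(((n+k+1):ℕ):ℤ))) (ε (((n+k+1):ℕ):ℤ))‖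
            ≤ C * ρ ^ (n+k+1) * (D * s⁻¹ ^ (n+k+1)) := by
              refine h1.trans ?_
              apply mul_le_mul_of_nonneg_left h2 (by positivity)
          _ = (C * D) * (ρ ^ (n+k+1) * s⁻¹ ^ (n+k+1)) := by ring
          _ = (C * D) * q ^ (n+k+1) := by rw [hqpow]
          _ = (C * D * q ^ (n+1)) * q ^ k := by rw [show n+k+1 = (n+1)+k by ring, pow_add]; ring
      have hsumgeo : Summable (fun k : ℕ => (C * D * q ^ (n+1)) * q ^ k) :=
        (summable_geometric_of_lt_one hq0.le hq1).mul_left _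
      have hsumnorm : Summable (fun k : ℕ =>
          ‖Matrix.toEuclideanCLM (𝕜 := ℝ) (Φ ^ (-(((n+k+1):ℕ):ℤ))) (ε (((n+k+1):ℕ):ℤ))‖) :=
        Summable.of_nonneg_of_le (fun k => norm_nonneg _) hnorm_each hsumgeo
      calc ‖∑' k : ℕ, Matrix.toEuclideanCLM (𝕜 := ℝ) (Φ ^ (-(((n+k+1):ℕ):ℤ)))
              (ε (((n+k+1):ℕ):ℤ))‖
          ≤ ∑' k : ℕ, ‖Matrix.toEuclideanCLM (𝕜 := ℝ) (Φ ^ (-(((n+k+1):ℕ):ℤ)))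
              (ε (((n+k+1):ℕ):ℤ))‖ := norm_tsum_le_tsum_norm hsumnorm
        _ ≤ ∑' k : ℕ, (C * D * q ^ (n+1)) * q ^ k := hsumnorm.tsum_le_tsum hnorm_each hsumgeo
        _ = (C * D * q ^ (n+1)) * (1-q)⁻¹ := by
            rw [tsum_mul_left, tsum_geometric_of_lt_one hq0.le hq1]
        _ = (C * D * (1-q)⁻¹ * q) * q ^ n := by rw [pow_succ]; ring
    have htendsto : ∀ v : EuclideanSpace ℝ (Fin N),
        (∀ t : ℤ, x t = Matrix.toEuclideanCLM (𝕜 := ℝ) (Φ ^ t) v - S t) →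
        Tendsto (fun n : ℕ => Matrix.toEuclideanLin (Φ ^ (-(n : ℤ))) (x n)) atTop (𝓝 v) := by
      intro v hv
      have hfe : (fun n : ℕ => Matrix.toEuclideanLin (Φ ^ (-(n : ℤ))) (x n))
          = fun n : ℕ => v - Matrix.toEuclideanCLM (𝕜 := ℝ) (Φ ^ (-(n:ℤ))) (S n) :=
        funext (hUn v hv)
      rw [hfe]
      have h0 : Tendsto (fun n : ℕ =>
          Matrix.toEuclideanCLM (𝕜 := ℝ) (Φ ^ (-(n:ℤ))) (S n)) atTop (𝓝 0) := by
        apply squeeze_zero_norm hSn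
        have := (tendsto_pow_atTop_nhds_zero_of_lt_one hq0.le hq1).const_mul
          (C * D * (1-q)⁻¹ * q)
        simpa using this
      have := (tendsto_const_nhds (x := v) (f := atTop)).sub h0
      simpa using this
    have hform : ∀ (v : EuclideanSpace ℝ (Fin N)) (t : ℤ),
        (Matrix.toEuclideanLin (Φ ^ t) v -
          ∑' k : ℕ, Matrix.toEuclideanLin (Φ ^ (-(k : ℤ) - 1)) (ε (t + k + 1)))
        = Matrix.toEuclideanCLM (𝕜 := ℝ) (Φ ^ t) v - S t := by
      intro v t
      rw [hlin, hmatch t]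
    refine ⟨⟨fun hrec => ⟨x 0 + S 0, fun t => ?_⟩, fun hv => ?_⟩, fun hrec v hv => ?_⟩
    · rw [hform]
      exact hforward hrec t
    · obtain ⟨v, hv⟩ := hv
      refine hbackward v fun t => ?_
      rw [← hform]
      exact hv t
    · have hv' : ∀ t : ℤ, x t = Matrix.toEuclideanCLM (𝕜 := ℝ) (Φ ^ t) v - S t := by
        intro t
        rw [← hform]
        exact hv t
      refine ⟨htendsto v hv', fun hx => ?_⟩
      obtain ⟨Dx, hDx, hxD⟩ := stmt18_growth ⟨hs0, hs1⟩ (hx s ⟨hs0, hs1⟩)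
      have h0 : Tendsto (fun n : ℕ =>
          Matrix.toEuclideanLin (Φ ^ (-(n : ℤ))) (x n)) atTop (𝓝 0) := by
        apply squeeze_zero_norm (a := fun n : ℕ => (C * Dx) * q ^ n)
        · intro n
          rw [hlin]
          have h1 := hz n (x (n:ℤ))
          have h2 : ‖x (n:ℤ)‖ ≤ Dx * s⁻¹ ^ n := by
            have := hxD (n:ℤ)
            rwa [Int.natAbs_natCast] at this
          calc ‖Matrix.toEuclideanCLM (𝕜 := ℝ) (Φ ^ (-(n:ℤ))) (x (n:ℤ))‖
              ≤ C * ρ ^ n * (Dx * s⁻¹ ^ n) := by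
                refine h1.trans ?_
                apply mul_le_mul_of_nonneg_left h2 (by positivity)
            _ = (C * Dx) * (ρ ^ n * s⁻¹ ^ n) := by ring
            _ = (C * Dx) * q ^ n := by rw [hqpow]
        · simpa using (tendsto_pow_atTop_nhds_zero_of_lt_one hq0.le hq1).const_mul (C * Dx)
      exact tendsto_nhds_unique (htendsto v hv') h0
end
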